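/- arXiv:1910.07177 — 8 statements merged into one kernel-verified Lean document; each statement's English description precedes it below -/
import Mathlib

section
/- Let f : G → H be a group homomorphism and let S ⊆ G be a totally symmetric set with |S| = n. Then the cardinality of f(S) (as a set) is either 1 or n. -/
/-- A finite family `g : Fin n → G` of distinct elements of a group `G` is *totally symmetric*
if its members pairwise commute and every permutation of them is realized by conjugation. -/
def IsTotallySymmetricFamily {G : Type*} [Group G] {n : ℕ} (g : Fin n → G) : Prop :=
  Function.Injective g ∧ (∀ i j, Commute (g i) (g j)) ∧
    ∀ σ : Equiv.Perm (Fin n), ∃ h : G, ∀ i, h * g i * h⁻¹ = g (σ i)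

lemma exists_perm_pair {n : ℕ} {i j k l : Fin n} (hij : i ≠ j) (hkl : k ≠ l) :
    ∃ σ : Equiv.Perm (Fin n), σ i = k ∧ σ j = l := by
  set σ₁ := Equiv.swap i k with hσ1
  have h1 : σ₁ i = k := Equiv.swap_apply_left i k
  have hj'k : σ₁ j ≠ k := fun h => hij (σ₁.injective (h.trans h1.symm)).symm
  refine ⟨σ₁.trans (Equiv.swap (σ₁ j) l), ?_, ?_⟩
  · simp only [Equiv.trans_apply, h1]
    exact Equiv.swap_apply_of_ne_of_ne (Ne.symm hj'k) hkl
  · simp only [Equiv.trans_apply, Equiv.swap_apply_left]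

/-- If `f : G → H` is a homomorphism and `S ⊆ G` is a totally symmetric set of size `n`,
then the image `f(S)` has cardinality either `1` or `n`. -/
theorem image_card_eq_one_or {G H : Type*} [Group G] [Group H] {n : ℕ}
    (g : Fin n → G) (hS : IsTotallySymmetricFamily g) (f : G →* H) :
    (Set.range fun i => f (g i)).ncard = 1 ∨ (Set.range fun i => f (g i)).ncard = n := by
  obtain ⟨-, -, hperm⟩ := hS
  by_cases hinj : Function.Injective (fun i => f (g i))
  · right
    classical
    rw [Set.ncard_eq_toFinset_card', Set.toFinset_range, Finset.card_image_of_injective _ hinj,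
      Finset.card_univ, Fintype.card_fin]
  · left
    rw [Function.not_injective_iff] at hinj
    obtain ⟨i, j, hfij, hij⟩ := hinj
    have key : ∀ k, f (g k) = f (g i) := by
      intro k
      by_cases hk : k = i
      · rw [hk]
      · obtain ⟨σ, hσi, hσj⟩ := exists_perm_pair hij (Ne.symm hk)
        obtain ⟨h, hh⟩ := hperm σ
        have e1 := hh i
        have e2 := hh j
        rw [hσi] at e1
        rw [hσj] at e2
        calc f (g k) = f (h * g j * h⁻¹) := by rw [e2]
          _ = f h * f (g j) * (f h)⁻¹ := by rw [map_mul, map_mul, map_inv]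
          _ = f h * f (g i) * (f h)⁻¹ := by rw [hfij]
          _ = f (h * g i * h⁻¹) := by rw [map_mul, map_mul, map_inv]
          _ = f (g i) := by rw [e1]
    have : (Set.range fun k => f (g k)) = {f (g i)} := by
      apply Set.eq_singleton_iff_unique_mem.mpr
      exact ⟨⟨i, rfl⟩, fun x ⟨k, hk⟩ => hk ▸ key k⟩
    rw [this, Set.ncard_singleton]
end

section
/- Let S = {g₁,…,gₙ} be a totally symmetric subset of a group G such that every element of S has finite order. Then the subgroup ⟨S⟩ generated by S is finite and |⟨S⟩| ≥ 2^{n-1}. -/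
/-- If `S = {g₁, …, gₙ}` is a totally symmetric subset of a group `G` all of whose elements
have finite order, then the subgroup `⟨S⟩` is finite of order at least `2^(n-1)`. -/
theorem closure_finite_and_card_ge {G : Type*} [Group G] {n : ℕ} (hn : 1 ≤ n)
    (g : Fin n → G) (hS : IsTotallySymmetricFamily g) (hord : ∀ i, IsOfFinOrder (g i)) :
    (Subgroup.closure (Set.range g) : Set G).Finite ∧
      2 ^ (n - 1) ≤ Nat.card (Subgroup.closure (Set.range g)) := by
  obtain ⟨m, rfl⟩ : ∃ m, n = m + 1 := ⟨n - 1, (Nat.succ_pred_eq_of_pos hn).symm⟩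
  obtain ⟨hinj, hcomm, hperm⟩ := hS
  set K := Subgroup.closure (Set.range g) with hKdef
  letI : CommGroup K := Subgroup.closureCommGroupOfComm
    (by rintro _ ⟨i, rfl⟩ _ ⟨j, rfl⟩; exact hcomm i j)
  have hmem : ∀ i, g i ∈ K := fun i => Subgroup.subset_closure ⟨i, rfl⟩
  set g' : Fin (m + 1) → K := fun i => ⟨g i, hmem i⟩ with hg'
  set Φ : (Fin (m + 1) → ℤ) → K := fun v => ∏ i, g' i ^ v i with hΦ
  have hΦadd : ∀ v w, Φ (v + w) = Φ v * Φ w := by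
    intro v w
    simp only [hΦ, Pi.add_apply, zpow_add, Finset.prod_mul_distrib]
  have hΦzero : Φ 0 = 1 := by simp [hΦ]
  have hΦneg : ∀ v, Φ (-v) = (Φ v)⁻¹ := by
    intro v
    have h1 : Φ v * Φ (-v) = 1 := by rw [← hΦadd]; simpa using hΦzero
    exact (inv_eq_of_mul_eq_one_right h1).symm
  have hΦsingle : ∀ (j : Fin (m + 1)) (a : ℤ), Φ (Pi.single j a) = g' j ^ a := by
    intro j a
    refine (Fintype.prod_eq_single j ?_).trans (by simp)
    intro i hi
    simp [Pi.single_eq_of_ne hi]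
  have hordg' : ∀ i, IsOfFinOrder (g' i) := by
    intro i
    obtain ⟨k, hk, hk1⟩ := isOfFinOrder_iff_pow_eq_one.1 (hord i)
    refine isOfFinOrder_iff_pow_eq_one.2 ⟨k, hk, Subtype.ext ?_⟩
    have : ((g' i ^ k : K) : G) = (g i) ^ k := map_pow K.subtype (g' i) k
    simpa [this] using hk1
  -- key divisibility lemma
  have key : ∀ v : Fin (m + 1) → ℤ, Φ v = 1 → ∀ j k : Fin (m + 1),
      (orderOf (g' j * (g' k)⁻¹) : ℤ) ∣ v j - v k := by
    intro v hv j k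
    rcases eq_or_ne j k with rfl | hjk
    · simp
    obtain ⟨h, hh⟩ := hperm (Equiv.swap j k)
    have hmaps : ∀ x ∈ K, h * x * h⁻¹ ∈ K := by
      intro x hx
      refine Subgroup.closure_induction ?_ ?_ ?_ ?_ hx
      · rintro _ ⟨i, rfl⟩
        rw [hh i]; exact hmem _
      · simpa using K.one_mem
      · intro a b _ _ hda hdb
        have hab : h * (a * b) * h⁻¹ = (h * a * h⁻¹) * (h * b * h⁻¹) := by group
        rw [hab]; exact K.mul_mem hda hdb
      · intro a _ hda
        have hai : h * a⁻¹ * h⁻¹ = (h * a * h⁻¹)⁻¹ := by group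
        rw [hai]; exact K.inv_mem hda
    let e : K →* K :=
      { toFun := fun x => ⟨h * x * h⁻¹, hmaps x x.2⟩
        map_one' := by ext; simp
        map_mul' := fun a b => by
          ext
          show h * (↑a * ↑b) * h⁻¹ = (h * ↑a * h⁻¹) * (h * ↑b * h⁻¹)
          group }
    have hσ : Φ (fun i => v (Equiv.swap j k i)) = 1 := by
      have h1 : e (Φ v) = Φ (fun i => v (Equiv.swap j k i)) := by
        rw [hΦ]
        rw [map_prod]
        have he : ∀ i, e (g' i ^ v i) = g' (Equiv.swap j k i) ^ v i := by
          intro i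
          rw [map_zpow]
          congr 1
          exact Subtype.ext (hh i)
        rw [Finset.prod_congr rfl fun i _ => he i]
        exact Fintype.prod_equiv (Equiv.swap j k)
          (fun i => g' (Equiv.swap j k i) ^ v i)
          (fun i => g' i ^ v (Equiv.swap j k i))
          (fun i => by simp only [Equiv.swap_apply_self])
      rw [hv, map_one] at h1
      exact h1.symm
    have h2 : Φ (v - fun i => v (Equiv.swap j k i)) = 1 := by
      rw [sub_eq_add_neg, hΦadd, hΦneg, hσ, hv]; simp
    have h3 : (v - fun i => v (Equiv.swap j k i)) =
        Pi.single j (v j - v k) + Pi.single k (v k - v j) := by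
      funext i
      rcases eq_or_ne i j with rfl | hij
      · simp [Equiv.swap_apply_left, Pi.single_eq_of_ne hjk]
      rcases eq_or_ne i k with rfl | hik
      · simp [Equiv.swap_apply_right, Pi.single_eq_of_ne hjk.symm]
      · simp [Equiv.swap_apply_of_ne_of_ne hij hik, Pi.single_eq_of_ne hij,
          Pi.single_eq_of_ne hik]
    rw [h3, hΦadd, hΦsingle, hΦsingle] at h2
    have h4 : (g' j * (g' k)⁻¹) ^ (v j - v k) = 1 := by
      rw [mul_zpow, inv_zpow', neg_sub]
      exact h2
    exact orderOf_dvd_iff_zpow_eq_one.2 h4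
  -- surjectivity of Φ onto K
  have hsurj : ∀ x : K, ∃ v, Φ v = x := by
    intro x
    have hx : x ∈ Subgroup.closure (((↑) : K → G) ⁻¹' Set.range g) := by
      rw [Subgroup.closure_closure_coe_preimage]; trivial
    refine Subgroup.closure_induction ?_ ⟨0, hΦzero⟩ ?_ ?_ hx
    · intro y hy
      obtain ⟨i, hi⟩ := hy
      exact ⟨Pi.single i 1, by rw [hΦsingle, zpow_one]; exact Subtype.ext hi⟩
    · intro a b _ _ ha hb
      obtain ⟨va, hva⟩ := ha
      obtain ⟨vb, hvb⟩ := hb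
      exact ⟨va + vb, by rw [hΦadd, hva, hvb]⟩
    · intro a _ ha
      obtain ⟨va, hva⟩ := ha
      exact ⟨-va, by rw [hΦneg, hva]⟩
  -- finiteness
  haveI hfinK : Finite K := by
    refine Finite.of_surjective
      (fun c : (∀ i : Fin (m + 1), Fin (orderOf (g' i))) => Φ fun i => (c i : ℤ)) ?_
    intro x
    obtain ⟨v, hv⟩ := hsurj x
    have ho : ∀ i, 0 < orderOf (g' i) := fun i => (hordg' i).orderOf_pos
    refine ⟨fun i => ⟨(v i % (orderOf (g' i) : ℤ)).toNat, ?_⟩, ?_⟩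
    · have h1 : 0 ≤ v i % (orderOf (g' i) : ℤ) :=
        Int.emod_nonneg _ (by exact_mod_cast (ho i).ne')
      have h2 : v i % (orderOf (g' i) : ℤ) < orderOf (g' i) :=
        Int.emod_lt_of_pos _ (by exact_mod_cast ho i)
      omega
    · rw [← hv, hΦ]
      refine Finset.prod_congr rfl fun i _ => ?_
      have h1 : 0 ≤ v i % (orderOf (g' i) : ℤ) :=
        Int.emod_nonneg _ (by exact_mod_cast (ho i).ne')
      show g' i ^ (((v i % (orderOf (g' i) : ℤ)).toNat : ℕ) : ℤ) = g' i ^ v i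
      rw [Int.toNat_of_nonneg h1]
      exact zpow_mod_orderOf (g' i) (v i)
  have hfinset : (K : Set G).Finite := Set.finite_coe_iff.mp (by exact hfinK)
  refine ⟨hfinset, ?_⟩
  -- the lower bound
  set d : Fin m → ℕ := fun i => orderOf (g' i.castSucc * (g' (Fin.last m))⁻¹) with hd
  have hd2 : ∀ i, 2 ≤ d i := by
    intro i
    have hne : g' i.castSucc * (g' (Fin.last m))⁻¹ ≠ 1 := by
      intro hcon
      rw [mul_inv_eq_one] at hcon
      have : g i.castSucc = g (Fin.last m) := congrArg Subtype.val hcon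
      exact (Fin.castSucc_lt_last i).ne (hinj this)
    have hf : IsOfFinOrder (g' i.castSucc * (g' (Fin.last m))⁻¹) :=
      (Commute.all _ _).isOfFinOrder_mul (hordg' _) (hordg' _).inv
    have h0 := hf.orderOf_pos
    have h1 : orderOf (g' i.castSucc * (g' (Fin.last m))⁻¹) ≠ 1 := fun hcon =>
      hne (orderOf_eq_one_iff.mp hcon)
    simp only [hd]
    omega
  choose V hV using hsurj
  have hFsurj : Function.Surjective (fun x : K => fun i : Fin m =>
      ((V x i.castSucc - V x (Fin.last m) : ℤ) : ZMod (d i))) := by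
    intro t
    set v : Fin (m + 1) → ℤ := Fin.lastCases 0 (fun i => ((t i).val : ℤ)) with hvdef
    refine ⟨Φ v, ?_⟩
    funext i
    haveI : NeZero (d i) := ⟨by have := hd2 i; omega⟩
    have h1 : Φ (V (Φ v) - v) = 1 := by
      rw [sub_eq_add_neg, hΦadd, hΦneg, hV]
      simp
    have h2 := key _ h1 i.castSucc (Fin.last m)
    simp only [Pi.sub_apply] at h2
    have h2' : (d i : ℤ) ∣ (V (Φ v) i.castSucc - V (Φ v) (Fin.last m))
        - (v i.castSucc - v (Fin.last m)) := by
      have : (V (Φ v) i.castSucc - v i.castSucc) - (V (Φ v) (Fin.last m) - v (Fin.last m))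
          = (V (Φ v) i.castSucc - V (Φ v) (Fin.last m)) - (v i.castSucc - v (Fin.last m)) := by
        ring
      rwa [this] at h2
    have h3 : ((V (Φ v) i.castSucc - V (Φ v) (Fin.last m) : ℤ) : ZMod (d i))
        = ((v i.castSucc - v (Fin.last m) : ℤ) : ZMod (d i)) := by
      rw [ZMod.intCast_eq_intCast_iff]
      exact (Int.modEq_iff_dvd.mpr h2').symm
    show ((V (Φ v) i.castSucc - V (Φ v) (Fin.last m) : ℤ) : ZMod (d i)) = t i
    rw [h3]
    have hv1 : v i.castSucc = ((t i).val : ℤ) := by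
      simp [hvdef]
    have hv2 : v (Fin.last m) = 0 := by
      simp [hvdef]
    rw [hv1, hv2, sub_zero, Int.cast_natCast, ZMod.natCast_val, ZMod.cast_id]
  have hcard := Nat.card_le_card_of_surjective _ hFsurj
  rw [Nat.card_pi] at hcard
  simp only [Nat.card_zmod] at hcard
  calc 2 ^ (m + 1 - 1) = ∏ _i : Fin m, 2 := by
        simp [Finset.prod_const, Finset.card_univ]
    _ ≤ ∏ i, d i := Finset.prod_le_prod' fun i _ => hd2 i
    _ ≤ Nat.card K := hcard
end

section
/- Let S = {g₁,…,gₙ} be a totally symmetric subset of a group G. Since the elements of S all have the same order, let p be the smallest integer in [1,m] (where m is the common order, assumed finite) such that gᵢ^p = gⱼ^p for all i,j. Then p > 1 and the subgroup generated by S has order at least p^{n-1}. -/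
lemma tsf_transfer {G : Type*} [Group G] {n : ℕ} {g : Fin n → G}
    (hS : IsTotallySymmetricFamily g) {j k : Fin n} (hjk : j ≠ k) {t : ℤ}
    (h : g j ^ t = g k ^ t) : ∀ i l : Fin n, g i ^ t = g l ^ t := by
  intro i l
  rcases eq_or_ne i l with rfl | hil
  · rfl
  set σ₁ := Equiv.swap j i with hσ₁
  have h1 : σ₁ j = i := Equiv.swap_apply_left j i
  have hk' : σ₁ k ≠ i := fun hh => hjk (σ₁.injective (hh.trans h1.symm)).symm
  set σ := σ₁.trans (Equiv.swap (σ₁ k) l) with hσ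
  have hσj : σ j = i := by
    show Equiv.swap (σ₁ k) l (σ₁ j) = i
    rw [h1]
    exact Equiv.swap_apply_of_ne_of_ne (Ne.symm hk') hil
  have hσk : σ k = l := Equiv.swap_apply_left _ _
  obtain ⟨c, hc⟩ := hS.2.2 σ
  have e1 := hc j; have e2 := hc k
  rw [hσj] at e1; rw [hσk] at e2
  calc g i ^ t = ((MulAut.conj c) (g j)) ^ t := by rw [MulAut.conj_apply, e1]
    _ = (MulAut.conj c) (g j ^ t) := (map_zpow _ _ _).symm
    _ = (MulAut.conj c) (g k ^ t) := by rw [h]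
    _ = ((MulAut.conj c) (g k)) ^ t := map_zpow _ _ _
    _ = g l ^ t := by rw [MulAut.conj_apply, e2]

lemma tsf_p_dvd {G : Type*} [Group G] {n : ℕ} {g : Fin n → G} {p : ℕ} (hp1 : 1 ≤ p)
    (hp : ∀ i j, g i ^ p = g j ^ p)
    (hmin : ∀ q, 1 ≤ q → (∀ i j, g i ^ q = g j ^ q) → p ≤ q)
    {t : ℤ} (ht : ∀ i j, g i ^ t = g j ^ t) : (p : ℤ) ∣ t := by
  set A : AddSubgroup ℤ :=
    { carrier := {t : ℤ | ∀ i j, g i ^ t = g j ^ t}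
      zero_mem' := by intro i j; simp
      add_mem' := by intro a b ha hb i j; rw [zpow_add, zpow_add, ha i j, hb i j]
      neg_mem' := by intro a ha i j; rw [zpow_neg, zpow_neg, ha i j] } with hAdef
  obtain ⟨a, hA⟩ := Int.subgroup_cyclic A
  have hpA : (p : ℤ) ∈ A := by
    intro i j; rw [zpow_natCast, zpow_natCast, hp i j]
  have htA : t ∈ A := ht
  have haA : a ∈ A := by
    rw [hA]; exact AddSubgroup.mem_closure_singleton.2 ⟨1, one_smul _ _⟩
  rw [hA, AddSubgroup.mem_closure_singleton] at hpA htA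
  obtain ⟨u, hu⟩ := hpA
  obtain ⟨v, hv⟩ := htA
  have hadvp : a ∣ (p : ℤ) := ⟨u, by rw [← hu, smul_eq_mul]; ring⟩
  have hadvt : a ∣ t := ⟨v, by rw [← hv, smul_eq_mul]; ring⟩
  have ha0 : a ≠ 0 := by
    rintro rfl
    simp at hadvp
    omega
  have hqA : (a.natAbs : ℤ) ∈ A := by
    rcases Int.natAbs_eq a with h | h
    · rw [← h]; exact haA
    · rw [← neg_neg ((a.natAbs : ℤ))]; exact A.neg_mem (by rw [← h]; exact haA)
  have hq : ∀ i j, g i ^ (a.natAbs) = g j ^ (a.natAbs) := by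
    intro i j
    have := hqA i j
    rwa [zpow_natCast, zpow_natCast] at this
  have h1q : 1 ≤ a.natAbs := by
    have := Int.natAbs_pos.2 ha0; omega
  have hpq : p ≤ a.natAbs := hmin _ h1q hq
  have hdvdn : a.natAbs ∣ p := by
    have := Int.natAbs_dvd_natAbs.mpr hadvp
    simpa using this
  have hqp : a.natAbs ≤ p := Nat.le_of_dvd (by omega) hdvdn
  have : a.natAbs = p := le_antisymm hqp hpq
  rw [← this]
  exact (Int.natAbs_dvd).2 hadvt


/-- Let `S = {g₁, …, gₙ}` be a totally symmetric set in `G` whose elements have common finite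
order `m`, and let `p` be the smallest integer in `[1, m]` with `gᵢ^p = gⱼ^p` for all `i, j`.
Then `p > 1` and the subgroup generated by `S` has order at least `p^(n-1)`. -/
theorem one_lt_p_and_card_closure_ge {G : Type*} [Group G] {n m p : ℕ} (hn : 2 ≤ n)
    (g : Fin n → G) (hS : IsTotallySymmetricFamily g)
    (hm : ∀ i, orderOf (g i) = m) (hm0 : 0 < m)
    (hp1 : 1 ≤ p) (hpm : p ≤ m)
    (hp : ∀ i j, g i ^ p = g j ^ p)
    (hmin : ∀ q, 1 ≤ q → (∀ i j, g i ^ q = g j ^ q) → p ≤ q) :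
    1 < p ∧ p ^ (n - 1) ≤ Nat.card (Subgroup.closure (Set.range g)) := by
  obtain ⟨hinj, hcomm, hperm⟩ := id hS
  have hp2 : 1 < p := by
    rcases Nat.lt_or_ge 1 p with h | h
    · exact h
    · exfalso
      have hpe : p = 1 := le_antisymm h hp1
      have h01 := hp ⟨0, by omega⟩ ⟨1, by omega⟩
      rw [hpe, pow_one, pow_one] at h01
      have := hinj h01
      simp [Fin.ext_iff] at this
  refine ⟨hp2, ?_⟩
  have hm2 : 1 < m := lt_of_lt_of_le hp2 hpm
  haveI : NeZero m := ⟨by omega⟩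
  haveI : NeZero p := ⟨by omega⟩
  haveI : Fact (1 < m) := ⟨hm2⟩
  set H := Subgroup.closure (Set.range g) with hH
  have hcm : ∀ x y : H, x * y = y * x := by
    rintro ⟨x, hx⟩ ⟨y, hy⟩
    refine Subtype.ext ?_
    show x * y = y * x
    refine Subgroup.closure_induction₂ (p := fun x y _ _ => Commute x y) ?_ ?_ ?_ ?_ ?_ ?_ ?_ hx hy
    · rintro x y ⟨i, rfl⟩ ⟨j, rfl⟩; exact hcomm i j
    · intro x _; exact Commute.one_left x
    · intro x _; exact Commute.one_right x
    · intro x y z _ _ _ h1 h2; exact h1.mul_left h2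
    · intro y z x _ _ _ h1 h2; exact h1.mul_right h2
    · intro x y _ _ h; exact h.inv_left
    · intro x y _ _ h; exact h.inv_right
  letI : CommGroup H := { (inferInstance : Group H) with mul_comm := hcm }
  let φ : H →* G := MonoidHom.mk' (fun x => (x : G)) (fun a b => rfl)
  have hφ : Function.Injective φ := Subtype.val_injective
  let g' : Fin n → H := fun i => ⟨g i, Subgroup.subset_closure ⟨i, rfl⟩⟩
  have hφg' : ∀ i (N : ℕ), φ (g' i ^ N) = g i ^ N := fun i N => by
    rw [map_pow]; rfl
  -- finiteness of H
  let Φ : (Fin n → ZMod m) → H := fun k => ∏ i, g' i ^ (k i).val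
  have hsur : ∀ x : G, x ∈ H → ∃ k, φ (Φ k) = x := by
    intro x hx
    refine Subgroup.closure_induction ?_ ?_ ?_ ?_ hx
    · rintro x ⟨i, rfl⟩
      refine ⟨Pi.single i 1, ?_⟩
      have h1 : Φ (Pi.single i 1) = g' i := by
        show (∏ j, g' j ^ ((Pi.single i 1 : Fin n → ZMod m) j).val) = g' i
        rw [Fintype.prod_eq_single i (fun j hj => by
          rw [Pi.single_eq_of_ne hj]; simp)]
        rw [Pi.single_eq_same, ZMod.val_one, pow_one]
      rw [h1]; rfl
    · refine ⟨0, ?_⟩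
      have h1 : Φ 0 = 1 := by
        show (∏ j, g' j ^ ((0 : Fin n → ZMod m) j).val) = 1
        simp
      rw [h1, map_one]
    · rintro x y _ _ ⟨k, rfl⟩ ⟨l, rfl⟩
      refine ⟨k + l, ?_⟩
      rw [← map_mul]
      congr 1
      show (∏ j, g' j ^ ((k + l) j).val) = (∏ j, g' j ^ (k j).val) * ∏ j, g' j ^ (l j).val
      rw [← Finset.prod_mul_distrib]
      refine Finset.prod_congr rfl fun i _ => ?_
      simp only [Pi.add_apply]
      rw [← pow_add]
      apply hφ
      rw [hφg', hφg', ZMod.val_add]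
      have hpm' := pow_mod_orderOf (g i) ((k i).val + (l i).val)
      rw [hm i] at hpm'
      exact hpm'
    · rintro x _ ⟨k, rfl⟩
      refine ⟨-k, ?_⟩
      rw [← map_inv]
      congr 1
      show (∏ j, g' j ^ ((-k) j).val) = (∏ j, g' j ^ (k j).val)⁻¹
      rw [← Finset.prod_inv_distrib]
      refine Finset.prod_congr rfl fun i _ => ?_
      simp only [Pi.neg_apply]
      refine eq_inv_of_mul_eq_one_left ?_
      rw [← pow_add]
      apply hφ
      rw [hφg', map_one]
      have hz : ((((-(k i)).val + (k i).val : ℕ)) : ZMod m) = 0 := by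
        push_cast [ZMod.natCast_val, ZMod.cast_id]
        ring
      have hdvd : m ∣ ((-(k i)).val + (k i).val) :=
        (ZMod.natCast_eq_zero_iff _ _).1 hz
      exact orderOf_dvd_iff_pow_eq_one.mp (by rw [hm i]; exact hdvd)
  haveI : Finite H := by
    have hsub : (H : Set G) ⊆ Set.range (fun k => φ (Φ k)) := fun x hx =>
      (hsur x hx).imp fun k hk => hk
    exact ((Set.finite_range _).subset hsub).to_subtype
  -- the injective family
  let e : Fin (n - 1) → Fin n := Fin.castLE (Nat.sub_le n 1)
  have he : Function.Injective e := Fin.castLE_injective _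
  let L : Fin n := ⟨n - 1, by omega⟩
  have heL : ∀ i, e i ≠ L := by
    intro i hcon
    have h1 : (i : ℕ) = n - 1 := congrArg Fin.val hcon
    have h2 : (i : ℕ) < n - 1 := i.isLt
    omega
  let Ψ : (Fin (n - 1) → ZMod p) → H := fun a => ∏ i, g' (e i) ^ (a i).val
  have hΨ : Function.Injective Ψ := by
    intro a b hab
    funext i₀
    set c : Fin (n - 1) → ℤ := fun i => ((a i).val : ℤ) - ((b i).val : ℤ) with hcdef
    have hP : ∏ i, g' (e i) ^ c i = 1 := by
      have step : ∏ i, g' (e i) ^ c i = Ψ a / Ψ b := by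
        calc ∏ i, g' (e i) ^ c i
            = ∏ i, (g' (e i) ^ (a i).val / g' (e i) ^ (b i).val) := by
              refine Finset.prod_congr rfl fun i _ => ?_
              show g' (e i) ^ (((a i).val : ℤ) - ((b i).val : ℤ)) = _
              rw [zpow_sub, zpow_natCast, zpow_natCast, div_eq_mul_inv]
          _ = (∏ i, g' (e i) ^ (a i).val) / (∏ i, g' (e i) ^ (b i).val) :=
              Finset.prod_div_distrib _ _
          _ = Ψ a / Ψ b := rfl
      rw [step, hab, div_self']
    obtain ⟨h, hh⟩ := hperm (Equiv.swap (e i₀) L)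
    have hmemc : ∀ x : G, x ∈ H → h * x * h⁻¹ ∈ H := by
      intro x hx
      refine Subgroup.closure_induction ?_ ?_ ?_ ?_ hx
      · rintro x ⟨i, rfl⟩
        rw [hh i]
        exact Subgroup.subset_closure ⟨_, rfl⟩
      · simpa using one_mem H
      · intro x y _ _ hx hy
        have hxy : h * (x * y) * h⁻¹ = (h * x * h⁻¹) * (h * y * h⁻¹) := by group
        rw [hxy]; exact mul_mem hx hy
      · intro x _ hx
        have hxi : h * x⁻¹ * h⁻¹ = (h * x * h⁻¹)⁻¹ := by group
        rw [hxi]; exact inv_mem hx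
    let ψ : H →* H := MonoidHom.mk' (fun x => ⟨h * (x : G) * h⁻¹, hmemc x x.2⟩)
      (fun a b => Subtype.ext (by
        show h * ((a : G) * (b : G)) * h⁻¹ = (h * (a : G) * h⁻¹) * (h * (b : G) * h⁻¹)
        group))
    let gσ : Fin (n - 1) → H := fun i =>
      ⟨g (Equiv.swap (e i₀) L (e i)), Subgroup.subset_closure ⟨_, rfl⟩⟩
    have hQ : ∏ i, gσ i ^ c i = 1 := by
      have h3 := congrArg ψ hP
      rw [map_prod, map_one] at h3
      simp only [map_zpow] at h3
      rw [← h3]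
      refine Finset.prod_congr rfl fun i _ => ?_
      congr 1
      exact Subtype.ext (hh (e i)).symm
    have hkey : g L ^ c i₀ = g (e i₀) ^ c i₀ := by
      have h4 : ∏ i, (gσ i ^ c i / g' (e i) ^ c i) = 1 := by
        rw [Finset.prod_div_distrib, hQ, hP, div_one]
      rw [Fintype.prod_eq_single i₀ (fun i hi => by
        have hfix : Equiv.swap (e i₀) L (e i) = e i :=
          Equiv.swap_apply_of_ne_of_ne (fun hcon => hi (he hcon)) (heL i)
        have hge : gσ i = g' (e i) := Subtype.ext (by show g _ = g (e i); rw [hfix])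
        rw [hge, div_self'])] at h4
      have h5 := div_eq_one.mp h4
      have h6 := congrArg φ h5
      simp only [map_zpow] at h6
      have h7 : g (Equiv.swap (e i₀) L (e i₀)) ^ c i₀ = g (e i₀) ^ c i₀ := h6
      rwa [Equiv.swap_apply_left] at h7
    have htall := tsf_transfer hS (Ne.symm (heL i₀)) hkey
    have hdvd : (p : ℤ) ∣ c i₀ := tsf_p_dvd hp1 hp hmin htall
    have hc0 : c i₀ = 0 := by
      by_contra hne
      have hpos : 0 < |c i₀| := abs_pos.mpr hne
      have hle : (p : ℤ) ≤ |c i₀| := Int.le_of_dvd hpos ((dvd_abs _ _).mpr hdvd)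
      have h1 : ((a i₀).val : ℤ) < p := by exact_mod_cast ZMod.val_lt (a i₀)
      have h2 : ((b i₀).val : ℤ) < p := by exact_mod_cast ZMod.val_lt (b i₀)
      have hb1 : (0 : ℤ) ≤ ((a i₀).val : ℤ) := by positivity
      have hb2 : (0 : ℤ) ≤ ((b i₀).val : ℤ) := by positivity
      have hceq : c i₀ = ((a i₀).val : ℤ) - ((b i₀).val : ℤ) := rfl
      have hlt : |c i₀| < p := abs_lt.mpr ⟨by omega, by omega⟩
      omega
    have hval : (a i₀).val = (b i₀).val := by
      have hz : ((a i₀).val : ℤ) - ((b i₀).val : ℤ) = 0 := hc0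
      omega
    exact ZMod.val_injective p hval
  calc p ^ (n - 1) = Nat.card (Fin (n - 1) → ZMod p) := by
        rw [Nat.card_fun, Nat.card_eq_fintype_card, Nat.card_eq_fintype_card,
          ZMod.card, Fintype.card_fin]
    _ ≤ Nat.card H := Nat.card_le_card_of_injective Ψ hΨ
end

section
/- Let G be a group containing a totally symmetric subset S of size n all of whose elements have finite order. Then |G| ≥ 2^{n-1} · n!. -/
/-- If a group `G` contains a totally symmetric set of size `n` all of whose elements have
finite order, then `|G| ≥ 2^(n-1) · n!` (trivially true when `G` is infinite). -/
theorem card_ge_of_totallySymmetric {G : Type*} [Group G] {n : ℕ}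
    (g : Fin n → G) (hS : IsTotallySymmetricFamily g) (hord : ∀ i, IsOfFinOrder (g i)) :
    ((2 ^ (n - 1) * Nat.factorial n : ℕ) : Cardinal) ≤ Cardinal.mk G := by
  obtain ⟨hinj, hcomm, hperm⟩ := hS
  cases n with
  | zero =>
      have h1 : (1 : Cardinal) ≤ Cardinal.mk G :=
        Cardinal.one_le_iff_ne_zero.mpr (Cardinal.mk_ne_zero G)
      simpa using h1
  | succ m =>
      choose h hh using hperm
      -- pairwise commutation, packaged for `noncommProd`
      have hcs : ∀ (f : Fin m → G) (T : Finset (Fin m)),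
          (∀ i j, Commute (f i) (f j)) →
          (T : Set (Fin m)).Pairwise (Function.onFun Commute f) :=
        fun f T hf i _ j _ _ => hf i j
      have hgc : ∀ (σ : Equiv.Perm (Fin (m + 1))) (i j : Fin m),
          Commute (g (σ i.succ)) (g (σ j.succ)) := fun σ i j => hcomm _ _
      -- the subset-products
      set a : Finset (Fin m) → G :=
        fun T => T.noncommProd (fun i => g i.succ)
          (hcs _ T fun i j => hcomm i.succ j.succ) with ha
      -- permuted subset-products
      set P : Equiv.Perm (Fin (m + 1)) → Finset (Fin m) → G :=
        fun σ T => T.noncommProd (fun j => g (σ j.succ)) (hcs _ T (hgc σ)) with hP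
      -- congruence helper (proof-irrelevant in the commutation witness)
      have hcong : ∀ (T : Finset (Fin m)) (f f' : Fin m → G) (p) (p'),
          (∀ j ∈ T, f j = f' j) → T.noncommProd f p = T.noncommProd f' p' := by
        intro T f f' p p' hff'
        exact Finset.noncommProd_congr rfl hff' p
      -- splitting helper
      have hsplit : ∀ (f : Fin m → G) (hf : ∀ i j, Commute (f i) (f j))
          (T : Finset (Fin m)) (k : Fin m), k ∈ T →
          T.noncommProd f (hcs f T hf) =
            f k * (T.erase k).noncommProd f (hcs f (T.erase k) hf) := by
        intro f hf T k hk
        calc T.noncommProd f (hcs f T hf)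
            = (insert k (T.erase k)).noncommProd f (hcs f _ hf) := by
              rw [Finset.insert_erase hk]
          _ = f k * (T.erase k).noncommProd f (hcs f (T.erase k) hf) :=
              Finset.noncommProd_insert_of_notMem _ _ _ _ (Finset.notMem_erase k T)
      -- every `g k` commutes with every subset-product
      have hA : ∀ (T : Finset (Fin m)) (k : Fin (m + 1)), Commute (g k) (a T) := by
        intro T k
        exact Finset.noncommProd_commute _ _ _ _ fun i _ => hcomm k i.succ
      -- conjugation computation
      have hconjprod : ∀ (σ : Equiv.Perm (Fin (m + 1))) (T : Finset (Fin m)),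
          h σ * a T * (h σ)⁻¹ = P σ T := by
        intro σ T
        have h1 := Finset.map_noncommProd T (fun i => g i.succ)
          (hcs _ T fun i j => hcomm i.succ j.succ) (MulAut.conj (h σ))
        simp only [MulAut.conj_apply] at h1
        calc h σ * a T * (h σ)⁻¹
            = T.noncommProd (fun i => h σ * g i.succ * (h σ)⁻¹) _ := h1
          _ = P σ T := hcong T _ _ _ _ fun j _ => hh σ j.succ
      -- cancellation: subset-products are pairwise distinct
      have key : ∀ T T' : Finset (Fin m), a T = a T' → T ⊆ T' := by
        intro T T' hTT' i hiT
        by_contra hiT'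
        set τ : Equiv.Perm (Fin (m + 1)) := Equiv.swap 0 i.succ with hτ
        have e1 : P τ T = g 0 * a (T.erase i) := by
          refine (hsplit (fun j => g (τ j.succ)) (hgc τ) T i hiT).trans ?_
          rw [show τ i.succ = 0 from Equiv.swap_apply_right _ _]
          congr 1
          refine hcong _ _ _ _ _ fun j hj => ?_
          have hj' : j.succ ≠ i.succ := fun hc =>
            (Finset.ne_of_mem_erase hj) (Fin.succ_injective m hc)
          rw [hτ]
          rw [Equiv.swap_apply_of_ne_of_ne (Fin.succ_ne_zero j) hj']
        have e2 : P τ T' = a T' := by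
          refine hcong _ _ _ _ _ fun j hj => ?_
          have hj' : j.succ ≠ i.succ := fun hc =>
            hiT' (by rwa [Fin.succ_injective m hc] at hj)
          rw [hτ, Equiv.swap_apply_of_ne_of_ne (Fin.succ_ne_zero j) hj']
        have e3 : a T = g i.succ * a (T.erase i) :=
          hsplit _ (fun i j => hcomm i.succ j.succ) T i hiT
        have e4 : g 0 * a (T.erase i) = g i.succ * a (T.erase i) := by
          rw [← e1, ← hconjprod τ T, hTT', hconjprod τ T', e2, ← hTT']
          exact e3
        have : (0 : Fin (m + 1)) = i.succ := hinj (mul_right_cancel e4)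
        exact (Fin.succ_ne_zero i) this.symm
      have keyeq : ∀ T T' : Finset (Fin m), a T = a T' → T = T' := fun T T' hTT' =>
        Finset.Subset.antisymm (key T T' hTT') (key T' T hTT'.symm)
      -- the injection
      have hΦ : Function.Injective
          (fun p : Equiv.Perm (Fin (m + 1)) × Finset (Fin m) => h p.1 * a p.2) := by
        rintro ⟨σ, T⟩ ⟨τ', T'⟩ heq
        simp only at heq
        have hστ : σ = τ' := by
          apply Equiv.ext
          intro i
          apply hinj
          have hb : Commute (a T' * (a T)⁻¹) (g i) :=
            Commute.mul_left (hA T' i).symm ((hA T i).symm.inv_left)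
          have hσ' : h σ = h τ' * (a T' * (a T)⁻¹) := by
            have : h σ * a T * (a T)⁻¹ = h τ' * a T' * (a T)⁻¹ := by rw [heq]
            calc h σ = h σ * a T * (a T)⁻¹ := by group
              _ = h τ' * a T' * (a T)⁻¹ := this
              _ = h τ' * (a T' * (a T)⁻¹) := by group
          calc g (σ i) = h σ * g i * (h σ)⁻¹ := (hh σ i).symm
            _ = h τ' * ((a T' * (a T)⁻¹) * g i * (a T' * (a T)⁻¹)⁻¹) * (h τ')⁻¹ := by
                rw [hσ']; group
            _ = h τ' * g i * (h τ')⁻¹ := by rw [hb.eq]; group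
            _ = g (τ' i) := hh τ' i
        subst hστ
        have : a T = a T' := mul_left_cancel heq
        rw [keyeq T T' this]
      have hΦ' : Function.Injective
          (fun p : ULift (Equiv.Perm (Fin (m + 1)) × Finset (Fin m)) => h p.down.1 * a p.down.2) :=
        fun p q hpq => ULift.down_injective (hΦ hpq)
      have hcard := Cardinal.mk_le_of_injective hΦ'
      have hval : Cardinal.mk (ULift.{_} (Equiv.Perm (Fin (m + 1)) × Finset (Fin m))) =
          ((2 ^ m * Nat.factorial (m + 1) : ℕ) : Cardinal) := by
        simp [Cardinal.mk_fintype, Fintype.card_prod, Fintype.card_perm, Fintype.card_finset,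
          Fintype.card_fin, mul_comm]
      rw [hval] at hcard
      simpa using hcard
end

section
/- In the braid group Bₙ with standard Artin generators σ₁,…,σ_{n-1}, the set X = {σ₁, σ₃, σ₅, …, σ_{2⌊n/2⌋-1}} of the ⌊n/2⌋ odd-indexed generators is a totally symmetric subset of Bₙ of size ⌊n/2⌋. -/
open FreeGroup in
/-- The braid relations on the generators `σ₁, …, σ_{n-1}` (indexed by `Fin (n-1)`, with index
`k` corresponding to `σ_{k+1}`): `σᵢσⱼ = σⱼσᵢ` for `|i - j| ≥ 2` and
`σᵢσ_{i+1}σᵢ = σ_{i+1}σᵢσ_{i+1}`. -/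
def braidRels (n : ℕ) : Set (FreeGroup (Fin (n - 1))) :=
  {r | (∃ i j : Fin (n - 1), (i : ℕ) + 2 ≤ (j : ℕ) ∧
          r = of i * of j * (of i)⁻¹ * (of j)⁻¹) ∨
       (∃ i j : Fin (n - 1), (i : ℕ) + 1 = (j : ℕ) ∧
          r = of i * of j * of i * (of j * of i * of j)⁻¹)}

/-- The braid group `Bₙ` on `n` strands, as the group presented by the Artin generators and
the braid relations. -/
def BraidGroup (n : ℕ) : Type := PresentedGroup (braidRels n)

instance (n : ℕ) : Group (BraidGroup n) :=
  inferInstanceAs (Group (PresentedGroup (braidRels n)))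

/-- `braidGen n k` is the Artin generator `σ_{k+1}` of `Bₙ`. -/
def braidGen (n : ℕ) (k : Fin (n - 1)) : BraidGroup n := PresentedGroup.of k

/-- The abelianization homomorphism `ν : Bₙ → ℤ` (signed word length), sending each
generator `σᵢ` to `1`. -/
def braidAbel (n : ℕ) : BraidGroup n →* Multiplicative ℤ :=
  PresentedGroup.toGroup (f := fun _ : Fin (n - 1) => Multiplicative.ofAdd (1 : ℤ)) (by
    rintro r (⟨i, j, hij, rfl⟩ | ⟨i, j, hij, rfl⟩) <;> simp <;> group)

lemma braidRel_eq_one {n : ℕ} {r : FreeGroup (Fin (n - 1))} (h : r ∈ braidRels n) :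
    (QuotientGroup.mk r : PresentedGroup (braidRels n)) = 1 := by
  rw [QuotientGroup.eq_one_iff]
  exact Subgroup.subset_normalClosure h

lemma braidGen_comm {n : ℕ} {i j : Fin (n - 1)} (h : (i : ℕ) + 2 ≤ (j : ℕ)) :
    Commute (braidGen n i) (braidGen n j) := by
  have h1 := braidRel_eq_one (n := n) (Or.inl ⟨i, j, h, rfl⟩)
  have h2 : braidGen n i * braidGen n j * (braidGen n i)⁻¹ * (braidGen n j)⁻¹ = 1 := by
    exact h1
  have h3 : braidGen n i * braidGen n j = braidGen n j * braidGen n i := by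
    rw [mul_inv_eq_one, mul_inv_eq_iff_eq_mul] at h2
    exact h2
  exact h3

lemma braidGen_braid {n : ℕ} {i j : Fin (n - 1)} (h : (i : ℕ) + 1 = (j : ℕ)) :
    braidGen n i * braidGen n j * braidGen n i = braidGen n j * braidGen n i * braidGen n j := by
  have h1 := braidRel_eq_one (n := n) (Or.inr ⟨i, j, h, rfl⟩)
  have h2 : (braidGen n i * braidGen n j * braidGen n i) *
      (braidGen n j * braidGen n i * braidGen n j)⁻¹ = 1 := by
    exact h1
  exact mul_inv_eq_one.mp h2

lemma swap_comm_of_ne {α : Type*} [DecidableEq α] {a b c d : α}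
    (h1 : a ≠ c) (h2 : a ≠ d) (h3 : b ≠ c) (h4 : b ≠ d) :
    Equiv.swap a b * Equiv.swap c d = Equiv.swap c d * Equiv.swap a b := by
  ext x
  simp only [Equiv.Perm.mul_apply, Equiv.swap_apply_def]
  split_ifs <;> simp_all

lemma swap_braid {α : Type*} [DecidableEq α] {a b c : α} (hab : a ≠ b) (hbc : b ≠ c)
    (hac : a ≠ c) :
    Equiv.swap a b * Equiv.swap b c * Equiv.swap a b =
      Equiv.swap b c * Equiv.swap a b * Equiv.swap b c := by
  have L : Equiv.swap a b * Equiv.swap c b * Equiv.swap a b = Equiv.swap a c := by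
    rw [Equiv.swap_comm a b]; exact Equiv.swap_mul_swap_mul_swap hbc.symm hac.symm
  have R : Equiv.swap c b * Equiv.swap a b * Equiv.swap c b = Equiv.swap c a := by
    rw [Equiv.swap_comm c b]; exact Equiv.swap_mul_swap_mul_swap hab hac
  rw [Equiv.swap_comm b c, L, R, Equiv.swap_comm]

/-- The homomorphism from the braid group to the symmetric group, sending `σ_{k+1}` to the
transposition `(k, k+1)`. -/
def braidToPerm (n : ℕ) : BraidGroup n →* Equiv.Perm (Fin n) :=
  PresentedGroup.toGroup
    (f := fun k : Fin (n - 1) =>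
      Equiv.swap (⟨k, by have := k.isLt; omega⟩ : Fin n)
        ⟨(k : ℕ) + 1, by have := k.isLt; omega⟩) (by
    rintro r (⟨i, j, hij, rfl⟩ | ⟨i, j, hij, rfl⟩) <;>
      simp only [map_mul, map_inv, FreeGroup.lift_apply_of]
    · rw [mul_inv_eq_iff_eq_mul, mul_inv_eq_iff_eq_mul, one_mul]
      apply swap_comm_of_ne <;> · simp only [ne_eq, Fin.mk.injEq]; omega
    · rw [mul_inv_eq_one]
      have hj : (⟨(j : ℕ), by have := j.isLt; omega⟩ : Fin n) =
          ⟨(i : ℕ) + 1, by have := i.isLt; omega⟩ := by simp only [Fin.mk.injEq]; omega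
      rw [hj]
      apply swap_braid <;> · simp only [ne_eq, Fin.mk.injEq]; omega)

lemma braidToPerm_gen (n : ℕ) (k : Fin (n - 1)) :
    braidToPerm n (braidGen n k) =
      Equiv.swap ⟨k, by have := k.isLt; omega⟩ ⟨(k : ℕ) + 1, by have := k.isLt; omega⟩ :=
  PresentedGroup.toGroup.of _

/-- The set `X = {σ₁, σ₃, …, σ_{2⌊n/2⌋-1}}` of odd-indexed Artin generators is a totally
symmetric subset of `Bₙ` of size `⌊n/2⌋`: its elements are distinct, pairwise commute, and
every permutation of them is realized by conjugation by an element of `Bₙ`. -/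
theorem oddGens_totallySymmetric (n : ℕ) (hn : 2 ≤ n) :
    let X : Fin (n / 2) → BraidGroup n := fun k => braidGen n ⟨2 * k, by have := k.isLt; omega⟩
    Function.Injective X ∧ (∀ i j, Commute (X i) (X j)) ∧
      ∀ σ : Equiv.Perm (Fin (n / 2)), ∃ h : BraidGroup n, ∀ i, h * X i * h⁻¹ = X (σ i) := by
  intro X
  refine ⟨?_, ?_, ?_⟩
  · -- injectivity
    intro i j hij
    have h2 := congrArg (braidToPerm n) hij
    rw [braidToPerm_gen, braidToPerm_gen] at h2
    have h3 := congrArg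
      (fun e : Equiv.Perm (Fin n) => e ⟨2 * (i : ℕ), by have := i.isLt; omega⟩) h2
    simp only [Equiv.swap_apply_left, Equiv.swap_apply_def, Fin.mk.injEq] at h3
    have hi := i.isLt; have hj := j.isLt
    split_ifs at h3 <;> simp_all [Fin.ext_iff] <;> omega
  · -- pairwise commuting
    intro i j
    rcases lt_trichotomy i j with h | h | h
    · have hv : (i : ℕ) < (j : ℕ) := h
      exact braidGen_comm (by simp only [Fin.val_mk]; omega)
    · rw [h]
    · have hv : (j : ℕ) < (i : ℕ) := h
      exact (braidGen_comm (by simp only [Fin.val_mk]; omega)).symm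
  · -- total symmetry
    set P : Equiv.Perm (Fin (n / 2)) → Prop :=
      fun σ => ∃ h : BraidGroup n, ∀ i, h * X i * h⁻¹ = X (σ i) with hP
    have hone : P 1 := ⟨1, fun i => by simp⟩
    have hmul : ∀ σ τ, P σ → P τ → P (σ * τ) := by
      rintro σ τ ⟨g, hg⟩ ⟨f, hf⟩
      refine ⟨g * f, fun i => ?_⟩
      calc g * f * X i * (g * f)⁻¹ = g * (f * X i * f⁻¹) * g⁻¹ := by group
        _ = g * X (τ i) * g⁻¹ := by rw [hf]
        _ = X (σ (τ i)) := hg _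
    have hadj : ∀ (k : ℕ) (hk : k + 1 < n / 2),
        P (Equiv.swap ⟨k, by omega⟩ ⟨k + 1, hk⟩) := by
      intro k hk
      have pa : 2 * k < n - 1 := by omega
      have pb : 2 * k + 1 < n - 1 := by omega
      have pc : 2 * k + 2 < n - 1 := by omega
      set A := braidGen n ⟨2 * k, pa⟩ with hA
      set B := braidGen n ⟨2 * k + 1, pb⟩ with hB
      set C := braidGen n ⟨2 * k + 2, pc⟩ with hC
      have hAC : A * C = C * A := braidGen_comm (by simp only [Fin.val_mk]; omega)
      have hAB : A * B * A = B * A * B := braidGen_braid (by simp only [Fin.val_mk])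
      have hBC : B * C * B = C * B * C := braidGen_braid (by simp only [Fin.val_mk])
      have hACw : ∀ x, A * (C * x) = C * (A * x) := fun x => by
        rw [← mul_assoc, hAC, mul_assoc]
      have hABw : ∀ x, A * (B * (A * x)) = B * (A * (B * x)) := fun x => by
        rw [← mul_assoc, ← mul_assoc, hAB, mul_assoc, mul_assoc]
      have hBCw : ∀ x, B * (C * (B * x)) = C * (B * (C * x)) := fun x => by
        rw [← mul_assoc, ← mul_assoc, hBC, mul_assoc, mul_assoc]
      have hABr : B * (A * B) = A * (B * A) := by
        rw [← mul_assoc, ← hAB, mul_assoc]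
      have hBCr : C * (B * C) = B * (C * B) := by
        rw [← mul_assoc, ← hBC, mul_assoc]
      refine ⟨B * (A * (C * B)), fun i => ?_⟩
      have hXA : X ⟨k, by omega⟩ = A := rfl
      have hXC : X ⟨k + 1, hk⟩ = C := by
        show braidGen n ⟨2 * (k + 1), _⟩ = C
        rw [hC]
        congr 1
      rcases eq_or_ne i ⟨k, by omega⟩ with rfl | hik
      · rw [Equiv.swap_apply_left, hXA, hXC, mul_inv_eq_iff_eq_mul]
        have key1 : C * (B * (A * (C * B))) = B * (A * (C * (B * A))) := by
          calc C * (B * (A * (C * B))) = C * (B * (C * (A * B))) := by rw [hACw]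
            _ = B * (C * (B * (A * B))) := (hBCw _).symm
            _ = B * (C * (A * (B * A))) := by rw [hABr]
            _ = B * (A * (C * (B * A))) := by rw [← hACw]
        simp only [mul_assoc]
        exact key1.symm
      rcases eq_or_ne i ⟨k + 1, hk⟩ with rfl | hik'
      · rw [Equiv.swap_apply_right, hXA, hXC, mul_inv_eq_iff_eq_mul]
        have key2 : B * (A * (C * (B * C))) = A * (B * (A * (C * B))) := by
          calc B * (A * (C * (B * C))) = B * (A * (B * (C * B))) := by rw [hBCr]
            _ = A * (B * (A * (C * B))) := (hABw _).symm
        simp only [mul_assoc]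
        exact key2
      · rw [Equiv.swap_apply_of_ne_of_ne hik hik']
        have hiv : (i : ℕ) ≠ k ∧ (i : ℕ) ≠ k + 1 := by
          constructor <;> intro h
          · exact hik (Fin.ext h)
          · exact hik' (Fin.ext h)
        have hcase : 2 * (i : ℕ) + 2 ≤ 2 * k ∨ 2 * k + 2 + 2 ≤ 2 * (i : ℕ) := by omega
        have cA : Commute (X i) A := by
          rcases hcase with h | h
          · exact braidGen_comm (by simp only [Fin.val_mk]; omega)
          · exact (braidGen_comm (i := ⟨2 * k, pa⟩) (by simp only [Fin.val_mk]; omega)).symm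
        have cB : Commute (X i) B := by
          rcases hcase with h | h
          · exact braidGen_comm (by simp only [Fin.val_mk]; omega)
          · exact (braidGen_comm (i := ⟨2 * k + 1, pb⟩) (by simp only [Fin.val_mk]; omega)).symm
        have cC : Commute (X i) C := by
          rcases hcase with h | h
          · exact braidGen_comm (by simp only [Fin.val_mk]; omega)
          · exact (braidGen_comm (i := ⟨2 * k + 2, pc⟩) (by simp only [Fin.val_mk]; omega)).symm
        have ch : Commute (X i) (B * (A * (C * B))) :=
          cB.mul_right (cA.mul_right (cC.mul_right cB))
        rw [mul_inv_eq_iff_eq_mul]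
        exact ch.symm.eq
    have hswapd : ∀ (d : ℕ) (x y : Fin (n / 2)), (y : ℕ) = (x : ℕ) + d + 1 →
        P (Equiv.swap x y) := by
      intro d
      induction d with
      | zero =>
        intro x y hxy
        have hy : y = ⟨(x : ℕ) + 1, by have := y.isLt; omega⟩ :=
          Fin.ext (by simp only [Fin.val_mk]; omega)
        rw [hy]
        exact hadj (x : ℕ) (by have := y.isLt; omega)
      | succ d ih =>
        intro x y hxy
        have hzlt : (y : ℕ) - 1 < n / 2 := by have := y.isLt; omega
        set z : Fin (n / 2) := ⟨(y : ℕ) - 1, hzlt⟩ with hz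
        have hzv : (z : ℕ) = (y : ℕ) - 1 := rfl
        have h1 : P (Equiv.swap z y) := by
          have hy : y = ⟨(z : ℕ) + 1, by have := y.isLt; omega⟩ :=
            Fin.ext (by simp only [Fin.val_mk]; omega)
          rw [hy]
          exact hadj (z : ℕ) (by have := y.isLt; omega)
        have h2 : P (Equiv.swap x z) := ih x z (by omega)
        have hxz : x ≠ z := by
          intro h; apply_fun (fun t : Fin (n / 2) => (t : ℕ)) at h; omega
        have hxy' : x ≠ y := by
          intro h; apply_fun (fun t : Fin (n / 2) => (t : ℕ)) at h; omega
        have key : Equiv.swap z y * Equiv.swap x z * Equiv.swap z y = Equiv.swap y x :=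
          Equiv.swap_mul_swap_mul_swap hxz hxy'
        have hrw : Equiv.swap x y = Equiv.swap z y * Equiv.swap x z * Equiv.swap z y := by
          rw [key, Equiv.swap_comm]
        rw [hrw]
        exact hmul _ _ (hmul _ _ h1 h2) h1
    have hswap' : ∀ x y : Fin (n / 2), x ≠ y → P (Equiv.swap x y) := by
      intro x y hxy
      have hv : (x : ℕ) ≠ (y : ℕ) := fun h => hxy (Fin.ext h)
      rcases lt_or_gt_of_ne hv with h | h
      · exact hswapd ((y : ℕ) - (x : ℕ) - 1) x y (by omega)
      · rw [Equiv.swap_comm]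
        exact hswapd ((x : ℕ) - (y : ℕ) - 1) y x (by omega)
    intro σ
    show P σ
    exact Equiv.Perm.swap_induction_on σ hone
      (fun f x y hxy hf => hmul _ _ (hswap' x y hxy) hf)
end

section
/- The set X' = {σ₁σ₃⁻¹, σ₁σ₅⁻¹, …, σ₁σ_{2⌊n/2⌋-1}⁻¹} is a totally symmetric subset of the commutator subgroup Bₙ' of the braid group Bₙ, of size ⌊n/2⌋ - 1. -/
/-- The element `σ₁ σ_{2(k+2)-1}⁻¹` of `Bₙ`, for `k : Fin (⌊n/2⌋ - 1)` (so `i = k + 2` ranges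
over `2 ≤ i ≤ ⌊n/2⌋`). -/
def braidX' (n : ℕ) (k : Fin (n / 2 - 1)) : BraidGroup n :=
  braidGen n ⟨0, by have := k.isLt; omega⟩ *
    (braidGen n ⟨2 * k + 2, by have := k.isLt; omega⟩)⁻¹

lemma braidRel_one {n : ℕ} {r : FreeGroup (Fin (n - 1))} (h : r ∈ braidRels n) :
    PresentedGroup.mk (braidRels n) r = 1 :=
  (QuotientGroup.eq_one_iff r).2 (Subgroup.subset_normalClosure h)

lemma gen_comm {n : ℕ} (i j : Fin (n - 1)) (h : (i : ℕ) + 2 ≤ (j : ℕ)) :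
    Commute (braidGen n i) (braidGen n j) := by
  have h1 := braidRel_one (n := n) (Or.inl ⟨i, j, h, rfl⟩)
  simp only [map_mul, map_inv] at h1
  have h2 : braidGen n i * braidGen n j * (braidGen n i)⁻¹ * (braidGen n j)⁻¹ = 1 := h1
  have h3 := congrArg (· * (braidGen n j * braidGen n i)) h2
  exact (by simpa [mul_assoc] using h3 : braidGen n i * braidGen n j = braidGen n j * braidGen n i)

lemma gen_braid {n : ℕ} (i j : Fin (n - 1)) (h : (i : ℕ) + 1 = (j : ℕ)) :
    braidGen n i * braidGen n j * braidGen n i = braidGen n j * braidGen n i * braidGen n j := by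
  have h1 := braidRel_one (n := n) (Or.inr ⟨i, j, h, rfl⟩)
  simp only [map_mul, map_inv] at h1
  have h2 : (braidGen n i * braidGen n j * braidGen n i) *
      (braidGen n j * braidGen n i * braidGen n j)⁻¹ = 1 := h1
  exact mul_inv_eq_one.mp h2

lemma abel_gen {n : ℕ} (v : ℕ) (hv : v < n - 1) :
    Abelianization.of (braidGen n ⟨v, hv⟩) = Abelianization.of (braidGen n ⟨0, by omega⟩) := by
  induction v with
  | zero => rfl
  | succ w ih =>
    have hw : w < n - 1 := by omega
    have e := congrArg Abelianization.of (gen_braid (n := n) ⟨w, hw⟩ ⟨w + 1, hv⟩ rfl)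
    simp only [map_mul] at e
    set A := Abelianization.of (braidGen n ⟨w, hw⟩) with hA
    set B := Abelianization.of (braidGen n ⟨w + 1, hv⟩) with hB
    have e2 : A * B * A = A * B * B := by rw [e, mul_comm B A]
    exact (mul_left_cancel e2).symm.trans (ih hw)

lemma mem_commutator_iff {G : Type*} [Group G] (x : G) :
    x ∈ commutator G ↔ Abelianization.of x = 1 :=
  (QuotientGroup.eq_one_iff x).symm

open Equiv

def lowFin (n : ℕ) (i : Fin (n - 1)) : Fin n := ⟨i, by have := i.isLt; omega⟩
def highFin (n : ℕ) (i : Fin (n - 1)) : Fin n := ⟨(i : ℕ) + 1, by have := i.isLt; omega⟩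

@[simp] lemma lowFin_val (n : ℕ) (i : Fin (n - 1)) : (lowFin n i : ℕ) = i := rfl
@[simp] lemma highFin_val (n : ℕ) (i : Fin (n - 1)) : (highFin n i : ℕ) = i + 1 := rfl

def braidPermFun (n : ℕ) (i : Fin (n - 1)) : Perm (Fin n) := swap (lowFin n i) (highFin n i)

lemma braidPermFun_comm {n : ℕ} (i j : Fin (n - 1)) (h : (i : ℕ) + 2 ≤ (j : ℕ)) :
    Commute (braidPermFun n i) (braidPermFun n j) := by
  apply Equiv.Perm.Disjoint.commute
  intro x
  rcases eq_or_ne x (lowFin n j) with h1 | h1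
  · left; rw [h1]
    apply Equiv.swap_apply_of_ne_of_ne <;>
      · apply Fin.ne_of_val_ne; simp; omega
  rcases eq_or_ne x (highFin n j) with h2 | h2
  · left; rw [h2]
    apply Equiv.swap_apply_of_ne_of_ne <;>
      · apply Fin.ne_of_val_ne; simp; omega
  · right; exact Equiv.swap_apply_of_ne_of_ne h1 h2

lemma braidPermFun_braid {n : ℕ} (i j : Fin (n - 1)) (h : (i : ℕ) + 1 = (j : ℕ)) :
    braidPermFun n i * braidPermFun n j * braidPermFun n i =
      braidPermFun n j * braidPermFun n i * braidPermFun n j := by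
  have hbb : lowFin n j = highFin n i := by apply Fin.ext; simp [h]
  have hab : lowFin n i ≠ highFin n i := by apply Fin.ne_of_val_ne; simp
  have hbc : highFin n i ≠ highFin n j := by apply Fin.ne_of_val_ne; simp; omega
  have hac : lowFin n i ≠ highFin n j := by apply Fin.ne_of_val_ne; simp; omega
  set a := lowFin n i with ha
  set b := highFin n i with hb
  set c := highFin n j with hc
  rw [braidPermFun, braidPermFun, hbb]
  show swap a b * swap b c * swap a b = swap b c * swap a b * swap b c
  have e1 : swap a b * swap b c * swap a b = swap a c := by
    rw [swap_comm a b, swap_comm b c]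
    exact swap_mul_swap_mul_swap (Ne.symm hbc) (Ne.symm hac)
  have e2 : swap b c * swap a b * swap b c = swap a c := by
    rw [swap_mul_swap_mul_swap hab hac, swap_comm]
  rw [e1, e2]

def braidPerm (n : ℕ) : BraidGroup n →* Equiv.Perm (Fin n) :=
  PresentedGroup.toGroup (f := braidPermFun n) (by
    rintro r (⟨i, j, hij, rfl⟩ | ⟨i, j, hij, rfl⟩) <;>
      simp only [map_mul, map_inv, FreeGroup.lift_apply_of]
    · rw [(braidPermFun_comm i j hij).eq]; group
    · rw [mul_inv_eq_one]
      exact braidPermFun_braid i j hij)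

lemma braidPerm_gen {n : ℕ} (k : Fin (n - 1)) :
    braidPerm n (braidGen n k) = braidPermFun n k :=
  PresentedGroup.toGroup.of _

lemma braidX'_lt {n : ℕ} (k : Fin (n / 2 - 1)) : 2 * (k : ℕ) + 2 < n - 1 := by
  have := k.isLt; omega

lemma braidX'_pos {n : ℕ} (k : Fin (n / 2 - 1)) : 0 < n - 1 := by
  have := k.isLt; omega

lemma braidX'_eq {n : ℕ} (k : Fin (n / 2 - 1)) (hk : 2 * (k : ℕ) + 2 < n - 1) (h0 : 0 < n - 1) :
    braidX' n k = braidGen n ⟨0, h0⟩ * (braidGen n ⟨2 * (k : ℕ) + 2, hk⟩)⁻¹ := rfl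

lemma abel_gen' {n : ℕ} (i j : Fin (n - 1)) :
    Abelianization.of (braidGen n i) = Abelianization.of (braidGen n j) := by
  obtain ⟨v, hv⟩ := i
  obtain ⟨w, hw⟩ := j
  exact (abel_gen v hv).trans (abel_gen w hw).symm

lemma braidX'_mem {n : ℕ} (k : Fin (n / 2 - 1)) :
    braidX' n k ∈ commutator (BraidGroup n) := by
  rw [mem_commutator_iff, braidX'_eq k (braidX'_lt k) (braidX'_pos k), map_mul, map_inv,
    abel_gen' (n := n) ⟨2 * (k : ℕ) + 2, braidX'_lt k⟩ ⟨0, braidX'_pos k⟩, mul_inv_cancel]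

lemma eval1 {n : ℕ} (k : Fin (n / 2 - 1)) :
    braidPerm n (braidX' n k) (highFin n ⟨2 * (k : ℕ) + 2, braidX'_lt k⟩) =
      lowFin n ⟨2 * (k : ℕ) + 2, braidX'_lt k⟩ := by
  rw [braidX'_eq k (braidX'_lt k) (braidX'_pos k), map_mul, map_inv, braidPerm_gen,
    braidPerm_gen]
  rw [braidPermFun, braidPermFun, Equiv.swap_inv, Equiv.Perm.mul_apply, Equiv.swap_apply_right]
  apply Equiv.swap_apply_of_ne_of_ne <;> · apply Fin.ne_of_val_ne; simp

lemma eval2 {n : ℕ} (k k' : Fin (n / 2 - 1)) (hne : (k' : ℕ) ≠ (k : ℕ)) :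
    braidPerm n (braidX' n k') (highFin n ⟨2 * (k : ℕ) + 2, braidX'_lt k⟩) =
      highFin n ⟨2 * (k : ℕ) + 2, braidX'_lt k⟩ := by
  rw [braidX'_eq k' (braidX'_lt k') (braidX'_pos k'), map_mul, map_inv, braidPerm_gen,
    braidPerm_gen]
  rw [braidPermFun, braidPermFun, Equiv.swap_inv, Equiv.Perm.mul_apply]
  have hinner : (Equiv.swap (lowFin n ⟨2 * (k' : ℕ) + 2, braidX'_lt k'⟩)
      (highFin n ⟨2 * (k' : ℕ) + 2, braidX'_lt k'⟩))
      (highFin n ⟨2 * (k : ℕ) + 2, braidX'_lt k⟩) =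
      highFin n ⟨2 * (k : ℕ) + 2, braidX'_lt k⟩ :=
    Equiv.swap_apply_of_ne_of_ne (by apply Fin.ne_of_val_ne; simp; omega)
      (by apply Fin.ne_of_val_ne; simp; omega)
  rw [hinner]
  apply Equiv.swap_apply_of_ne_of_ne <;> · apply Fin.ne_of_val_ne; simp

lemma braidX'_inj (n : ℕ) : Function.Injective (braidX' n) := by
  intro i j h
  by_contra hne
  have hvne : (j : ℕ) ≠ (i : ℕ) := fun hv => hne (Fin.ext hv.symm)
  have e1 := eval1 i
  rw [h] at e1
  rw [eval2 i j hvne] at e1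
  have := congrArg Fin.val e1
  simp at this

lemma gen_commX {n : ℕ} (i j : Fin (n / 2 - 1)) (hne : (i : ℕ) ≠ (j : ℕ)) :
    Commute (braidGen n ⟨2 * (i : ℕ) + 2, braidX'_lt i⟩)
      (braidGen n ⟨2 * (j : ℕ) + 2, braidX'_lt j⟩) := by
  rcases Nat.lt_or_ge (i : ℕ) (j : ℕ) with h | h
  · exact gen_comm _ _ (by show 2 * (i : ℕ) + 2 + 2 ≤ 2 * (j : ℕ) + 2; omega)
  · exact (gen_comm _ _ (by show 2 * (j : ℕ) + 2 + 2 ≤ 2 * (i : ℕ) + 2; omega)).symm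

lemma gen_comm0X {n : ℕ} (k : Fin (n / 2 - 1)) :
    Commute (braidGen n ⟨0, braidX'_pos k⟩) (braidGen n ⟨2 * (k : ℕ) + 2, braidX'_lt k⟩) :=
  gen_comm _ _ (by show 0 + 2 ≤ 2 * (k : ℕ) + 2; omega)

lemma braidX'_comm {n : ℕ} (i j : Fin (n / 2 - 1)) :
    Commute (braidX' n i) (braidX' n j) := by
  rcases eq_or_ne i j with rfl | hne
  · exact Commute.refl _
  have hvne : (i : ℕ) ≠ (j : ℕ) := fun hv => hne (Fin.ext hv)
  rw [braidX'_eq i (braidX'_lt i) (braidX'_pos i), braidX'_eq j (braidX'_lt j) (braidX'_pos i)]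
  have h0i := gen_comm0X i
  have h0j := gen_comm0X j
  have hij := gen_commX i j hvne
  exact ((Commute.refl _).mul_right h0j.inv_right).mul_left
    ((h0i.symm.inv_left).mul_right (hij.inv_left.inv_right))

lemma adj_real (n : ℕ) (p q : Fin (n / 2 - 1)) (hpq : (p : ℕ) + 1 = (q : ℕ)) :
    ∃ h ∈ commutator (BraidGroup n),
      ∀ k, h * braidX' n k * h⁻¹ = braidX' n (Equiv.swap p q k) := by
  have hq := q.isLt
  have h0 : 0 < n - 1 := by omega
  have hs : 2 * (p : ℕ) + 2 < n - 1 := by omega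
  have ht : 2 * (p : ℕ) + 3 < n - 1 := by omega
  have hu : 2 * (p : ℕ) + 4 < n - 1 := by omega
  set g0 := braidGen n ⟨0, h0⟩ with hg0
  set s := braidGen n ⟨2 * (p : ℕ) + 2, hs⟩ with hsdef
  set t := braidGen n ⟨2 * (p : ℕ) + 3, ht⟩ with htdef
  set u := braidGen n ⟨2 * (p : ℕ) + 4, hu⟩ with hudef
  have hst : s * t * s = t * s * t :=
    gen_braid ⟨2 * (p : ℕ) + 2, hs⟩ ⟨2 * (p : ℕ) + 3, ht⟩
      (by show 2 * (p : ℕ) + 2 + 1 = 2 * (p : ℕ) + 3; omega)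
  have htu : t * u * t = u * t * u :=
    gen_braid ⟨2 * (p : ℕ) + 3, ht⟩ ⟨2 * (p : ℕ) + 4, hu⟩
      (by show 2 * (p : ℕ) + 3 + 1 = 2 * (p : ℕ) + 4; omega)
  have hsu : Commute s u :=
    gen_comm ⟨2 * (p : ℕ) + 2, hs⟩ ⟨2 * (p : ℕ) + 4, hu⟩
      (by show 2 * (p : ℕ) + 2 + 2 ≤ 2 * (p : ℕ) + 4; omega)
  have c1 : SemiconjBy (s * t) s t := by simpa [SemiconjBy, mul_assoc] using hst
  have c2 : SemiconjBy (t * u) t u := by simpa [SemiconjBy, mul_assoc] using htu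
  have c3 : SemiconjBy (t * s) t s := by simpa [SemiconjBy, mul_assoc] using hst.symm
  have c4 : SemiconjBy (u * t) u t := by simpa [SemiconjBy, mul_assoc] using htu.symm
  have h1 : SemiconjBy ((t * u) * (s * t)) s u := c2.mul_left c1
  have e : (t * s) * (u * t) = (t * u) * (s * t) := by
    rw [mul_assoc t s, ← mul_assoc s u, hsu.eq, mul_assoc u s, ← mul_assoc t u]
  have h2 : SemiconjBy ((t * u) * (s * t)) u s := e ▸ c3.mul_left c4
  set d := (t * u) * (s * t) with hd
  have hfar : ∀ b : Fin (n - 1),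
      ((b : ℕ) + 2 ≤ 2 * (p : ℕ) + 2 ∨ 2 * (p : ℕ) + 6 ≤ (b : ℕ)) →
      Commute d (braidGen n b) := by
    intro b hb
    have cs : Commute s (braidGen n b) := by
      rcases hb with hb | hb
      · exact (gen_comm b _ (by show (b : ℕ) + 2 ≤ 2 * (p : ℕ) + 2; omega)).symm
      · exact gen_comm _ b (by show 2 * (p : ℕ) + 2 + 2 ≤ (b : ℕ); omega)
    have ct : Commute t (braidGen n b) := by
      rcases hb with hb | hb
      · exact (gen_comm b _ (by show (b : ℕ) + 2 ≤ 2 * (p : ℕ) + 3; omega)).symm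
      · exact gen_comm _ b (by show 2 * (p : ℕ) + 3 + 2 ≤ (b : ℕ); omega)
    have cu : Commute u (braidGen n b) := by
      rcases hb with hb | hb
      · exact (gen_comm b _ (by show (b : ℕ) + 2 ≤ 2 * (p : ℕ) + 4; omega)).symm
      · exact gen_comm _ b (by show 2 * (p : ℕ) + 4 + 2 ≤ (b : ℕ); omega)
    exact (ct.mul_left cu).mul_left (cs.mul_left ct)
  have hd0 : Commute d g0 :=
    hfar ⟨0, h0⟩ (Or.inl (by show 0 + 2 ≤ 2 * (p : ℕ) + 2; omega))
  set Q := g0 * g0 * g0 * g0 with hQ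
  have hQk : ∀ k : Fin (n / 2 - 1), Commute Q (braidX' n k) := by
    intro k
    rw [braidX'_eq k (braidX'_lt k) (braidX'_pos k)]
    have c0 : Commute g0 (braidGen n ⟨0, braidX'_pos k⟩ *
        (braidGen n ⟨2 * (k : ℕ) + 2, braidX'_lt k⟩)⁻¹) :=
      (Commute.refl _).mul_right (gen_comm0X k).inv_right
    exact ((c0.mul_left c0).mul_left c0).mul_left c0
  have conj_fun : ∀ x y : BraidGroup n, d * x = y * d →
      d * (g0 * x⁻¹) * d⁻¹ = g0 * y⁻¹ := by
    intro x y hxy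
    have hy : d * x * d⁻¹ = y := by rw [hxy, mul_inv_cancel_right]
    calc d * (g0 * x⁻¹) * d⁻¹ = (d * g0 * d⁻¹) * (d * x * d⁻¹)⁻¹ := by group
      _ = g0 * y⁻¹ := by rw [hy, hd0.eq, mul_inv_cancel_right]
  refine ⟨d * Q⁻¹, ?_, ?_⟩
  · rw [mem_commutator_iff, map_mul, map_inv, hd, hQ, hg0, hsdef, htdef, hudef]
    rw [map_mul, map_mul, map_mul, map_mul, map_mul, map_mul]
    rw [abel_gen' (n := n) ⟨2 * (p : ℕ) + 2, hs⟩ ⟨0, h0⟩,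
      abel_gen' (n := n) ⟨2 * (p : ℕ) + 3, ht⟩ ⟨0, h0⟩,
      abel_gen' (n := n) ⟨2 * (p : ℕ) + 4, hu⟩ ⟨0, h0⟩]
    group
  · intro k
    have hred : (d * Q⁻¹) * braidX' n k * (d * Q⁻¹)⁻¹ = d * braidX' n k * d⁻¹ := by
      have hc := (hQk k).inv_left.eq
      calc (d * Q⁻¹) * braidX' n k * (d * Q⁻¹)⁻¹
          = d * (Q⁻¹ * braidX' n k * Q) * d⁻¹ := by group
        _ = d * (braidX' n k * Q⁻¹ * Q) * d⁻¹ := by rw [hc]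
        _ = d * braidX' n k * d⁻¹ := by rw [mul_assoc (braidX' n k), inv_mul_cancel, mul_one]
    rw [hred]
    rcases eq_or_ne k p with rfl | hkp
    · rw [Equiv.swap_apply_left, braidX'_eq k (braidX'_lt k) h0,
        braidX'_eq q (braidX'_lt q) h0]
      have hgu : braidGen n ⟨2 * (q : ℕ) + 2, braidX'_lt q⟩ = u := by
        rw [hudef]; congr 1; exact Fin.ext (by simp; omega)
      have hgs : braidGen n ⟨2 * (k : ℕ) + 2, braidX'_lt k⟩ = s := by
        rw [hsdef]
      rw [hgu, hgs]
      exact conj_fun s u h1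
    rcases eq_or_ne k q with rfl | hkq
    · rw [Equiv.swap_apply_right, braidX'_eq k (braidX'_lt k) h0,
        braidX'_eq p (braidX'_lt p) h0]
      have hgu : braidGen n ⟨2 * (k : ℕ) + 2, braidX'_lt k⟩ = u := by
        rw [hudef]; congr 1; exact Fin.ext (by simp; omega)
      have hgs : braidGen n ⟨2 * (p : ℕ) + 2, braidX'_lt p⟩ = s := by
        rw [hsdef]
      rw [hgu, hgs]
      exact conj_fun u s h2
    · have hkp' : (k : ℕ) ≠ (p : ℕ) := fun hv => hkp (Fin.ext hv)
      have hkq' : (k : ℕ) ≠ (q : ℕ) := fun hv => hkq (Fin.ext hv)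
      rw [Equiv.swap_apply_of_ne_of_ne hkp hkq, braidX'_eq k (braidX'_lt k) h0]
      have hcw := hfar ⟨2 * (k : ℕ) + 2, braidX'_lt k⟩
        (by show 2 * (k : ℕ) + 2 + 2 ≤ 2 * (p : ℕ) + 2 ∨ 2 * (p : ℕ) + 6 ≤ 2 * (k : ℕ) + 2
            omega)
      exact conj_fun _ _ hcw.eq

/-- The set `X' = {σ₁σ₃⁻¹, σ₁σ₅⁻¹, …, σ₁σ_{2⌊n/2⌋-1}⁻¹}` is a totally symmetric subset of the
commutator subgroup `Bₙ'` of size `⌊n/2⌋ - 1`: its elements lie in `Bₙ'`, are distinct,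
pairwise commute, and every permutation of them is realized by conjugation by an element
of `Bₙ'`. -/
theorem braidX'_totallySymmetric (n : ℕ) (hn : 5 ≤ n) :
    (∀ k, braidX' n k ∈ commutator (BraidGroup n)) ∧
      Function.Injective (braidX' n) ∧
      (∀ i j, Commute (braidX' n i) (braidX' n j)) ∧
      ∀ σ : Equiv.Perm (Fin (n / 2 - 1)), ∃ h ∈ commutator (BraidGroup n),
        ∀ k, h * braidX' n k * h⁻¹ = braidX' n (σ k) := by
  refine ⟨fun k => braidX'_mem k, braidX'_inj n, fun i j => braidX'_comm i j, ?_⟩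
  have Rmul : ∀ σ τ : Equiv.Perm (Fin (n / 2 - 1)),
      (∃ h ∈ commutator (BraidGroup n), ∀ k, h * braidX' n k * h⁻¹ = braidX' n (σ k)) →
      (∃ h ∈ commutator (BraidGroup n), ∀ k, h * braidX' n k * h⁻¹ = braidX' n (τ k)) →
      (∃ h ∈ commutator (BraidGroup n), ∀ k, h * braidX' n k * h⁻¹ = braidX' n ((σ * τ) k)) := by
    rintro σ τ ⟨h1, hm1, hc1⟩ ⟨h2, hm2, hc2⟩
    refine ⟨h1 * h2, mul_mem hm1 hm2, fun k => ?_⟩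
    rw [Equiv.Perm.mul_apply, ← hc1 (τ k), ← hc2 k]
    group
  have Rswap : ∀ p q : Fin (n / 2 - 1), p ≠ q →
      ∃ h ∈ commutator (BraidGroup n),
        ∀ k, h * braidX' n k * h⁻¹ = braidX' n (Equiv.swap p q k) := by
    have key : ∀ dst : ℕ, ∀ p q : Fin (n / 2 - 1), (p : ℕ) < (q : ℕ) →
        (q : ℕ) - (p : ℕ) ≤ dst →
        ∃ h ∈ commutator (BraidGroup n),
          ∀ k, h * braidX' n k * h⁻¹ = braidX' n (Equiv.swap p q k) := by
      intro dst
      induction dst with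
      | zero => intro p q hlt hle; omega
      | succ D ih =>
        intro p q hlt hle
        rcases eq_or_ne ((p : ℕ) + 1) (q : ℕ) with hadj | hne
        · exact adj_real n p q hadj
        · have hp1 : (p : ℕ) + 1 < n / 2 - 1 := by have := q.isLt; omega
          set p' : Fin (n / 2 - 1) := ⟨(p : ℕ) + 1, hp1⟩ with hp'
          have h1 := adj_real n p p' rfl
          have h2 := ih p' q (by show (p : ℕ) + 1 < (q : ℕ); omega)
            (by show (q : ℕ) - ((p : ℕ) + 1) ≤ D; omega)
          have hpp' : p ≠ p' := Fin.ne_of_val_ne (by show (p : ℕ) ≠ (p : ℕ) + 1; omega)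
          have hpq : p ≠ q := Fin.ne_of_val_ne (by omega)
          have e : Equiv.swap p q = Equiv.swap p' q * Equiv.swap p p' * Equiv.swap p' q := by
            rw [Equiv.swap_mul_swap_mul_swap hpp' hpq, Equiv.swap_comm]
          rw [e]
          exact Rmul _ _ (Rmul _ _ h2 h1) h2
    intro p q hne
    rcases Nat.lt_or_ge (p : ℕ) (q : ℕ) with h | h
    · exact key _ p q h le_rfl
    · have hlt : (q : ℕ) < (p : ℕ) :=
        lt_of_le_of_ne h fun hv => hne (Fin.ext hv.symm)
      rw [Equiv.swap_comm]
      exact key _ q p hlt le_rfl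
  intro σ
  refine Equiv.Perm.swap_induction_on σ ⟨1, one_mem _, fun k => by simp⟩
    fun f x y hxy hf => Rmul _ _ (Rswap x y hxy) hf
end

section
/- Let n ≥ 5 and let G be a finite group. If f : Bₙ' → G is a non-trivial homomorphism from the commutator subgroup of the braid group, then |G| ≥ 2^{⌊n/2⌋-2} · (⌊n/2⌋-1)!. -/
namespace BraidProof
open scoped commutatorElement
variable {n : ℕ}
lemma rel_one {r : FreeGroup (Fin (n-1))} (hr : r ∈ braidRels n) :
    (PresentedGroup.mk (braidRels n) r : BraidGroup n) = 1 :=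
  (QuotientGroup.eq_one_iff r).2 (Subgroup.subset_normalClosure hr)
lemma braidGen_comm {i j : Fin (n-1)} (h : (i:ℕ) + 2 ≤ j) :
    Commute (braidGen n i) (braidGen n j) := by
  have h1 := rel_one (n := n) (Or.inl ⟨i, j, h, rfl⟩)
  simp only [map_mul, map_inv] at h1
  exact commutatorElement_eq_one_iff_commute.mp h1
lemma braidGen_braid {i j : Fin (n-1)} (h : (i:ℕ) + 1 = j) :
    braidGen n i * braidGen n j * braidGen n i = braidGen n j * braidGen n i * braidGen n j := by
  have h1 := rel_one (n := n) (Or.inr ⟨i, j, h, rfl⟩)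
  simp only [map_mul, map_inv] at h1
  rw [mul_inv_eq_one] at h1
  exact h1
def sig (n : ℕ) (j : ℕ) : BraidGroup n :=
  if h : j - 1 < n - 1 then braidGen n ⟨j - 1, h⟩ else 1
lemma sig_eq {j : ℕ} (h1 : 1 ≤ j) (h2 : j ≤ n - 1) :
    sig n j = braidGen n ⟨j - 1, by omega⟩ := by
  rw [sig, dif_pos]
lemma sig_comm {i j : ℕ} (hi : 1 ≤ i) (hij : i + 2 ≤ j) (hj : j ≤ n - 1) :
    Commute (sig n i) (sig n j) := by
  rw [sig_eq hi (by omega), sig_eq (by omega) hj]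
  exact braidGen_comm (by simp; omega)
lemma sig_braid {i : ℕ} (hi : 1 ≤ i) (hj : i + 1 ≤ n - 1) :
    sig n i * sig n (i+1) * sig n i = sig n (i+1) * sig n i * sig n (i+1) := by
  rw [sig_eq hi (by omega), sig_eq (by omega) hj]
  exact braidGen_braid (by simp; omega)
lemma braidGen_eq_sig (k : Fin (n-1)) : braidGen n k = sig n ((k:ℕ)+1) := by
  rw [sig_eq (by omega) (by omega)]
  congr 1

-- Part II
lemma conj_up {a : ℕ} (ha : 1 ≤ a) (h : a + 1 ≤ n - 1) :
    (sig n a * sig n (a+1)) * sig n a * (sig n a * sig n (a+1))⁻¹ = sig n (a+1) := by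
  have hb := sig_braid ha h
  calc (sig n a * sig n (a+1)) * sig n a * (sig n a * sig n (a+1))⁻¹
      = (sig n a * sig n (a+1) * sig n a) * ((sig n (a+1))⁻¹ * (sig n a)⁻¹) := by group
    _ = (sig n (a+1) * sig n a * sig n (a+1)) * ((sig n (a+1))⁻¹ * (sig n a)⁻¹) := by rw [hb]
    _ = sig n (a+1) := by group

lemma conj_down {a : ℕ} (ha : 1 ≤ a) (h : a + 1 ≤ n - 1) :
    (sig n (a+1) * sig n a) * sig n (a+1) * (sig n (a+1) * sig n a)⁻¹ = sig n a := by
  have hb := sig_braid ha h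
  calc (sig n (a+1) * sig n a) * sig n (a+1) * (sig n (a+1) * sig n a)⁻¹
      = (sig n (a+1) * sig n a * sig n (a+1)) * ((sig n a)⁻¹ * (sig n (a+1))⁻¹) := by group
    _ = (sig n a * sig n (a+1) * sig n a) * ((sig n a)⁻¹ * (sig n (a+1))⁻¹) := by rw [hb]
    _ = sig n a := by group

lemma exists_conj_sig {a b : ℕ} (ha : 1 ≤ a) (hab : a ≤ b) (hb : b ≤ n - 1) :
    ∃ w : BraidGroup n, w * sig n a * w⁻¹ = sig n b := by
  induction b, hab using Nat.le_induction with
  | base => exact ⟨1, by group⟩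
  | succ b hab ih =>
    obtain ⟨w, hw⟩ := ih (by omega)
    exact ⟨(sig n b * sig n (b+1)) * w, by
      calc (sig n b * sig n (b+1)) * w * sig n a * ((sig n b * sig n (b+1)) * w)⁻¹
          = (sig n b * sig n (b+1)) * (w * sig n a * w⁻¹) * (sig n b * sig n (b+1))⁻¹ := by group
        _ = (sig n b * sig n (b+1)) * sig n b * (sig n b * sig n (b+1))⁻¹ := by rw [hw]
        _ = sig n (b+1) := conj_up (by omega) hb⟩

lemma sig_mul_inv_mem {a b : ℕ} (ha : 1 ≤ a) (hb : 1 ≤ b) (ha' : a ≤ n - 1) (hb' : b ≤ n - 1) :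
    sig n a * (sig n b)⁻¹ ∈ commutator (BraidGroup n) := by
  rcases le_total b a with hba | hab
  · obtain ⟨w, hw⟩ := exists_conj_sig hb hba ha'
    have : sig n a * (sig n b)⁻¹ = ⁅w, sig n b⁆ := by
      rw [commutatorElement_def, ← hw]
    rw [this, commutator_def]
    exact Subgroup.commutator_mem_commutator (Subgroup.mem_top _) (Subgroup.mem_top _)
  · obtain ⟨w, hw⟩ := exists_conj_sig ha hab hb'
    have : sig n a * (sig n b)⁻¹ = (⁅w, sig n a⁆)⁻¹ := by
      rw [commutatorElement_def, ← hw]; group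
    rw [this, commutator_def]
    exact Subgroup.inv_mem _
      (Subgroup.commutator_mem_commutator (Subgroup.mem_top _) (Subgroup.mem_top _))

lemma prod_sig_mem {c : ℕ} (hc : 1 ≤ c) (hc' : c ≤ n - 1) :
    ∀ l : List ℕ, (∀ j ∈ l, 1 ≤ j ∧ j ≤ n - 1) →
      (l.map (sig n)).prod * ((sig n c)⁻¹) ^ l.length ∈ commutator (BraidGroup n) := by
  intro l
  induction l with
  | nil => intro _; simpa using Subgroup.one_mem _
  | cons x L ih =>
    intro hmem
    have hx := hmem x (List.mem_cons_self (a := x) (l := L))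
    have hL := ih (fun j hj => hmem j (List.mem_cons_of_mem x hj))
    have key : (List.map (sig n) (x :: L)).prod * ((sig n c)⁻¹) ^ (x :: L).length
        = (sig n x * (sig n c)⁻¹) *
          (sig n c * ((List.map (sig n) L).prod * ((sig n c)⁻¹) ^ L.length) * (sig n c)⁻¹) := by
      simp only [List.map_cons, List.prod_cons, List.length_cons, pow_succ]
      group
    rw [key]
    exact Subgroup.mul_mem _ (sig_mul_inv_mem hx.1 hc hx.2 hc')
      ((Subgroup.Normal.conj_mem inferInstance _ hL) _)

lemma exists_decomp {c : ℕ} (hc : 1 ≤ c) (hc' : c ≤ n - 1) (g : BraidGroup n) :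
    ∃ h ∈ commutator (BraidGroup n), ∃ k : ℤ, g = h * sig n c ^ k := by
  have htop : (⊤ : Subgroup (BraidGroup n)) ≤ commutator (BraidGroup n) ⊔ Subgroup.closure {sig n c} := by
    refine le_trans (le_of_eq (PresentedGroup.closure_range_of (braidRels n) :
      Subgroup.closure (Set.range (braidGen n)) = (⊤ : Subgroup (BraidGroup n))).symm) ?_
    apply Subgroup.closure_le _ |>.mpr
    rintro _ ⟨k, rfl⟩
    show braidGen n k ∈ _
    have : braidGen n k = (sig n ((k:ℕ)+1) * (sig n c)⁻¹) * sig n c := by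
      rw [braidGen_eq_sig]; group
    rw [this]
    exact Subgroup.mul_mem _
      (Subgroup.mem_sup_left (sig_mul_inv_mem (by omega) hc (by omega) hc'))
      (Subgroup.mem_sup_right (Subgroup.subset_closure rfl))
  have hg : g ∈ (↑(commutator (BraidGroup n) ⊔ Subgroup.closure {sig n c}) : Set (BraidGroup n)) :=
    htop (Subgroup.mem_top g)
  rw [Subgroup.normal_mul] at hg
  obtain ⟨h, hh, s, hs, rfl⟩ := hg
  obtain ⟨k, hk⟩ := Subgroup.mem_closure_singleton.mp hs
  exact ⟨h, hh, k, by rw [hk]⟩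

variable {Q : Type*} [Group Q]

lemma conj_conj {G : Type*} [Group G] (u v x : G) : (u*v)*x*(u*v)⁻¹ = u*(v*x*v⁻¹)*u⁻¹ := by group

lemma comm_conj {G : Type*} [Group G] {c x : G} (h : Commute c x) : c*x*c⁻¹ = x := by
  rw [h.eq]; group

lemma sig_conj_up {a : ℕ} (ha : 1 ≤ a) (h4 : a + 3 ≤ n - 1) :
    ((sig n a * sig n (a+1)) * (sig n (a+2) * sig n (a+3))) * sig n a *
      ((sig n a * sig n (a+1)) * (sig n (a+2) * sig n (a+3)))⁻¹ = sig n (a+1) := by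
  rw [conj_conj]
  have hv : Commute (sig n (a+2) * sig n (a+3)) (sig n a) :=
    Commute.mul_left ((sig_comm (i := a) (j := a+2) ha (by omega) (by omega)).symm)
      ((sig_comm (i := a) (j := a+3) ha (by omega) (by omega)).symm)
  rw [comm_conj hv]
  exact conj_up ha (by omega)

lemma sig_conj_up' {a : ℕ} (ha : 1 ≤ a) (h4 : a + 3 ≤ n - 1) :
    ((sig n a * sig n (a+1)) * (sig n (a+2) * sig n (a+3))) * sig n (a+2) *
      ((sig n a * sig n (a+1)) * (sig n (a+2) * sig n (a+3)))⁻¹ = sig n (a+3) := by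
  rw [conj_conj]
  have : sig n (a+2) * sig n (a+3) * sig n (a+2) * (sig n (a+2) * sig n (a+3))⁻¹
      = sig n (a+3) := conj_up (by omega) (by omega)
  rw [mul_assoc (sig n (a+2) * sig n (a+3)) (sig n (a+2))] at this
  rw [← mul_assoc (sig n (a+2) * sig n (a+3)) (sig n (a+2))] at this
  rw [this]
  have hu : Commute (sig n a * sig n (a+1)) (sig n (a+3)) :=
    Commute.mul_left (sig_comm (i := a) (j := a+3) ha (by omega) h4)
      (sig_comm (i := a+1) (j := a+3) (by omega) (by omega) h4)
  exact comm_conj hu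

lemma sig_conj_down {a : ℕ} (ha : 2 ≤ a) (h2 : a + 2 ≤ n - 1) :
    ((sig n (a+2) * sig n (a+1)) * (sig n a * sig n (a-1))) * sig n a *
      ((sig n (a+2) * sig n (a+1)) * (sig n a * sig n (a-1)))⁻¹ = sig n (a-1) := by
  rw [conj_conj]
  have key : sig n a * sig n (a-1) * sig n a * (sig n a * sig n (a-1))⁻¹ = sig n (a-1) := by
    have := conj_down (n := n) (a := a - 1) (by omega) (by omega)
    have e : a - 1 + 1 = a := by omega
    rw [e] at this
    exact this
  rw [key]
  have hv1 : Commute (sig n (a-1)) (sig n (a+2)) := sig_comm (by omega) (by omega) (by omega)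
  have hv2 : Commute (sig n (a-1)) (sig n (a+1)) := sig_comm (by omega) (by omega) (by omega)
  have hv : Commute (sig n (a+2) * sig n (a+1)) (sig n (a-1)) :=
    Commute.mul_left hv1.symm hv2.symm
  exact comm_conj hv

lemma sig_conj_down' {a : ℕ} (ha : 2 ≤ a) (h2 : a + 2 ≤ n - 1) :
    ((sig n (a+2) * sig n (a+1)) * (sig n a * sig n (a-1))) * sig n (a+2) *
      ((sig n (a+2) * sig n (a+1)) * (sig n a * sig n (a-1)))⁻¹ = sig n (a+1) := by
  rw [conj_conj]
  have hu : Commute (sig n a * sig n (a-1)) (sig n (a+2)) :=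
    Commute.mul_left (sig_comm (i := a) (j := a+2) (by omega) (by omega) h2)
      (sig_comm (i := a-1) (j := a+2) (by omega) (by omega) h2)
  rw [comm_conj hu]
  exact conj_down (by omega) h2

lemma adj_of_comm (φ : BraidGroup n →* Q) {i : ℕ} (hi : 1 ≤ i) (hi' : i + 1 ≤ n - 1)
    (h : Commute (φ (sig n i)) (φ (sig n (i+1)))) : φ (sig n i) = φ (sig n (i+1)) := by
  have hb := congrArg φ (sig_braid hi hi')
  simp only [map_mul] at hb
  set X := φ (sig n i)
  set Y := φ (sig n (i+1))
  -- X*Y*X = Y*X*Y, X*Y = Y*X ⟹ X = Y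
  have h1 : X * (X * Y) = X * (Y * Y) := by
    calc X * (X * Y) = X * (Y * X) := by rw [h.eq]
      _ = Y * X * Y := by rw [← hb]; group
      _ = X * Y * Y := by rw [← h.eq]
      _ = X * (Y * Y) := by group
  have h2 := mul_left_cancel h1
  exact mul_right_cancel h2

lemma adj_step_up (φ : BraidGroup n →* Q) {i : ℕ} (hi : 1 ≤ i) (hi' : i + 2 ≤ n - 1)
    (h : φ (sig n i) = φ (sig n (i+1))) : φ (sig n (i+1)) = φ (sig n (i+2)) := by
  apply adj_of_comm φ (by omega) (by omega)
  have hc : Commute (φ (sig n i)) (φ (sig n (i+2))) := (sig_comm hi (by omega) hi').map φ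
  rw [h] at hc
  exact hc

lemma adj_step_down (φ : BraidGroup n →* Q) {i : ℕ} (hi : 1 ≤ i) (hi' : i + 2 ≤ n - 1)
    (h : φ (sig n (i+1)) = φ (sig n (i+2))) : φ (sig n i) = φ (sig n (i+1)) := by
  apply adj_of_comm φ hi (by omega)
  have hc : Commute (φ (sig n i)) (φ (sig n (i+2))) := (sig_comm hi (by omega) hi').map φ
  rw [← h] at hc
  exact hc

lemma adj_all (φ : BraidGroup n →* Q) {c : ℕ} (hc : 1 ≤ c) (hc' : c + 1 ≤ n - 1)
    (h : φ (sig n c) = φ (sig n (c+1))) :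
    ∀ i, 1 ≤ i → i + 1 ≤ n - 1 → φ (sig n i) = φ (sig n (i+1)) := by
  -- first go up from c
  have up : ∀ i, c ≤ i → i + 1 ≤ n - 1 → φ (sig n i) = φ (sig n (i+1)) := by
    intro i hci
    induction i, hci using Nat.le_induction with
    | base => intro _; exact h
    | succ i hci ih =>
      intro hi'
      have := ih (by omega)
      exact adj_step_up φ (by omega) (by omega) this
  have down : ∀ k, 1 ≤ c - k → φ (sig n (c-k)) = φ (sig n (c-k+1)) := by
    intro k
    induction k with
    | zero => intro _; simpa using h
    | succ k ih =>
      intro hk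
      by_cases hck : c - k = c - (k+1)
      · rw [← hck]; exact ih (by omega)
      · have h1 : c - k = (c - (k+1)) + 1 := by omega
        have h2 := ih (by omega)
        rw [h1] at h2
        exact adj_step_down φ (by omega) (by omega) h2
  intro i hi hi'
  rcases le_total c i with hci | hic
  · exact up i hci hi'
  · have : i = c - (c - i) := by omega
    rw [this]
    exact down (c - i) (by omega)

lemma all_eq (φ : BraidGroup n →* Q) {c : ℕ} (hc : 1 ≤ c) (hc' : c + 1 ≤ n - 1)
    (h : φ (sig n c) = φ (sig n (c+1))) :
    ∀ i j, 1 ≤ i → i ≤ n - 1 → 1 ≤ j → j ≤ n - 1 → φ (sig n i) = φ (sig n j) := by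
  have key : ∀ i, 1 ≤ i → i ≤ n - 1 → φ (sig n i) = φ (sig n 1) := by
    intro i hi
    induction i with
    | zero => omega
    | succ i ih =>
      intro hi'
      rcases Nat.eq_or_lt_of_le hi with h1 | h1
      · rw [← h1]
      · have e1 := ih (by omega) (by omega)
        have e2 := adj_all φ hc hc' h i (by omega) (by omega)
        rw [← e2, e1]
  intro i j hi hi' hj hj'
  rw [key i hi hi', key j hj hj']

theorem commutator_le_normalClosure (hn6 : 6 ≤ n) {a b : ℕ} (ha : 1 ≤ a) (hab : a + 2 ≤ b)
    (hb : b ≤ n - 1) :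
    commutator (BraidGroup n) ≤ Subgroup.normalClosure {sig n a * (sig n b)⁻¹} := by
  set N := Subgroup.normalClosure {sig n a * (sig n b)⁻¹} with hN
  set φ := QuotientGroup.mk' N with hφ
  have hzN : sig n a * (sig n b)⁻¹ ∈ N := Subgroup.subset_normalClosure rfl
  have hz : φ (sig n a) = φ (sig n b) := by
    have : φ (sig n a * (sig n b)⁻¹) = 1 := (QuotientGroup.eq_one_iff _).2 hzN
    rw [map_mul, map_inv, mul_inv_eq_one] at this
    exact this
  -- produce an adjacent equality
  have hadj : ∃ c, 1 ≤ c ∧ c + 1 ≤ n - 1 ∧ φ (sig n c) = φ (sig n (c+1))  := by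
    rcases Nat.eq_or_lt_of_le hab with h2 | h3
    · -- b = a + 2
      rcases Nat.lt_or_ge (a + 3) (n - 1) with h4 | h4
      · -- up case possible? need a+3 ≤ n-1
        have h4' : a + 3 ≤ n - 1 := by omega
        have hb2 : sig n b = sig n (a+2) := by rw [← h2]
        have hz2 : φ (sig n a) = φ (sig n (a+2)) := hz.trans (congrArg φ hb2)
        have e3 : φ (sig n (a+1)) = φ (sig n (a+3)) := by
          conv_lhs => rw [← sig_conj_up (n := n) ha h4']
          conv_rhs => rw [← sig_conj_up' (n := n) ha h4']
          simp only [map_mul, map_inv, hz2]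
        refine ⟨a, ha, by omega, ?_⟩
        apply adj_of_comm φ ha (by omega)
        have hcc : Commute (φ (sig n a)) (φ (sig n (a+3))) :=
          (sig_comm ha (by omega) h4').map φ
        rw [← e3] at hcc
        exact hcc
      · -- a + 3 ≥ n - 1, i.e. down case; since b = a+2 ≤ n-1 and n ≥ 6, a ≥ 2
        have ha2 : 2 ≤ a := by omega
        have hb2 : sig n b = sig n (a+2) := by rw [← h2]
        have hz2 : φ (sig n a) = φ (sig n (a+2)) := hz.trans (congrArg φ hb2)
        have e3 : φ (sig n (a-1)) = φ (sig n (a+1)) := by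
          conv_lhs => rw [← sig_conj_down (n := n) ha2 (by omega)]
          conv_rhs => rw [← sig_conj_down' (n := n) ha2 (by omega)]
          simp only [map_mul, map_inv, hz2]
        refine ⟨a+1, by omega, by omega, ?_⟩
        apply adj_of_comm φ (by omega) (by omega)
        have hcc : Commute (φ (sig n (a-1))) (φ (sig n (a+2))) :=
          (sig_comm (by omega) (by omega) (by omega)).map φ
        rw [e3] at hcc
        exact hcc
    · -- b ≥ a + 3
      refine ⟨a, ha, by omega, ?_⟩
      apply adj_of_comm φ ha (by omega)
      have hcc : Commute (φ (sig n (a+1))) (φ (sig n b)) :=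
        (sig_comm (by omega) (by omega) hb).map φ
      rw [← hz] at hcc
      exact hcc.symm
  obtain ⟨c, hc, hc', hcadj⟩ := hadj
  have hall := all_eq φ hc hc' hcadj
  -- every element of the quotient is a power of φ (sig n 1)
  have hzpow : ∀ q : BraidGroup n ⧸ N, q ∈ Subgroup.zpowers (φ (sig n 1)) := by
    intro q
    obtain ⟨g, rfl⟩ := QuotientGroup.mk'_surjective N q
    have htop : Subgroup.closure (Set.range (braidGen n)) = (⊤ : Subgroup (BraidGroup n)) :=
      PresentedGroup.closure_range_of (braidRels n)
    have hg : g ∈ Subgroup.closure (Set.range (braidGen n)) := by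
      rw [htop]; exact Subgroup.mem_top g
    have hsub : Subgroup.closure (Set.range (braidGen n)) ≤
        (Subgroup.zpowers (φ (sig n 1))).comap φ := by
      apply Subgroup.closure_le _ |>.mpr
      rintro _ ⟨k, rfl⟩
      show braidGen n k ∈ Subgroup.comap φ (Subgroup.zpowers (φ (sig n 1)))
      rw [Subgroup.mem_comap, braidGen_eq_sig,
        hall ((k:ℕ)+1) 1 (by omega) (by omega) (by omega) (by omega)]
      exact Subgroup.mem_zpowers _
    exact Subgroup.mem_comap.mp (hsub hg)
  have hcomm : ∀ x y : BraidGroup n ⧸ N, Commute x y := by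
    intro x y
    obtain ⟨kx, hkx⟩ := Subgroup.mem_zpowers_iff.mp (hzpow x)
    obtain ⟨ky, hky⟩ := Subgroup.mem_zpowers_iff.mp (hzpow y)
    rw [← hkx, ← hky]
    exact Commute.zpow_zpow (Commute.refl _) kx ky
  rw [commutator_def, Subgroup.commutator_le]
  intro g₁ _ g₂ _
  have : φ ⁅g₁, g₂⁆ = 1 := by
    rw [map_commutatorElement]
    exact commutatorElement_eq_one_iff_commute.mpr (hcomm _ _)
  rw [← QuotientGroup.ker_mk' N]
  exact this


theorem hom_trivial (hn6 : 6 ≤ n) {G : Type*} [Group G]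
    (f : ↥(commutator (BraidGroup n)) →* G)
    {a b c : ℕ} (ha : 1 ≤ a) (hab : a + 2 ≤ b) (hb : b ≤ n - 1)
    (hc : 1 ≤ c) (hc' : c ≤ n - 1) (hca : c + 2 ≤ a ∨ a + 2 ≤ c) (hcb : c + 2 ≤ b ∨ b + 2 ≤ c)
    (hzmem : sig n a * (sig n b)⁻¹ ∈ commutator (BraidGroup n))
    (hfz : f ⟨sig n a * (sig n b)⁻¹, hzmem⟩ = 1) : f = 1 := by
  set z := sig n a * (sig n b)⁻¹ with hzdef
  set K := Subgroup.map (commutator (BraidGroup n)).subtype f.ker with hK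
  have hcz : Commute (sig n c) z := by
    have h1 : Commute (sig n c) (sig n a) := by
      rcases hca with h | h
      · exact sig_comm hc h (by omega)
      · exact (sig_comm ha h hc').symm
    have h2 : Commute (sig n c) (sig n b) := by
      rcases hcb with h | h
      · exact sig_comm hc h hb
      · exact (sig_comm (by omega) h hc').symm
    exact Commute.mul_right h1 h2.inv_right
  have hmemK : ∀ x : BraidGroup n, x ∈ commutator (BraidGroup n) →
      (∀ hx : x ∈ commutator (BraidGroup n), f ⟨x, hx⟩ = 1) → x ∈ K := by
    intro x hx hfx
    exact ⟨⟨x, hx⟩, by simpa using hfx hx, rfl⟩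
  have hconj : ∀ u : BraidGroup n, u * z * u⁻¹ ∈ K := by
    intro u
    obtain ⟨h, hh, k, rfl⟩ := exists_decomp hc hc' u
    have e1 : h * sig n c ^ k * z * (h * sig n c ^ k)⁻¹ = h * z * h⁻¹ := by
      have : sig n c ^ k * z * (sig n c ^ k)⁻¹ = z := comm_conj (hcz.zpow_left k)
      calc h * sig n c ^ k * z * (h * sig n c ^ k)⁻¹
          = h * (sig n c ^ k * z * (sig n c ^ k)⁻¹) * h⁻¹ := by group
        _ = h * z * h⁻¹ := by rw [this]
    rw [e1]
    have hmem : h * z * h⁻¹ ∈ commutator (BraidGroup n) :=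
      (Subgroup.Normal.conj_mem inferInstance z hzmem h)
    refine ⟨⟨h, hh⟩ * ⟨z, hzmem⟩ * (⟨h, hh⟩)⁻¹, ?_, rfl⟩
    have : f (⟨h, hh⟩ * ⟨z, hzmem⟩ * (⟨h, hh⟩)⁻¹) = 1 := by
      rw [map_mul, map_mul, map_inv, hfz]
      group
    simpa [MonoidHom.mem_ker] using this
  have hNK : Subgroup.normalClosure {z} ≤ K := by
    show Subgroup.closure (Group.conjugatesOfSet {z}) ≤ K
    apply (Subgroup.closure_le _).mpr
    intro x hxc
    rcases Group.mem_conjugatesOfSet_iff.mp hxc with ⟨y, hy, hconj'⟩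
    rcases Set.mem_singleton_iff.mp hy ▸ hconj' with h'
    obtain ⟨u, hu⟩ := isConj_iff.mp h'
    have := hconj u
    rw [hu] at this
    exact this
  have hCK : commutator (BraidGroup n) ≤ K :=
    le_trans (commutator_le_normalClosure hn6 ha hab hb) hNK
  ext x
  obtain ⟨y, hy, hyx⟩ := hCK x.2
  have : y = x := Subtype.ext (by simpa using hyx)
  rw [← this]
  simpa [MonoidHom.mem_ker] using hy


section Counting
variable {G' : Type*} [Group G']

theorem card_lower_bound [Finite G'] {m : ℕ} (hm : 2 ≤ m)
    (g : Fin m → G') (hinj : Function.Injective g) (hne : ∀ i, g i ≠ 1)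
    (hcomm : ∀ i j, Commute (g i) (g j))
    (hperm : ∀ π : Equiv.Perm (Fin m), ∃ c : G', ∀ i, c * g i * c⁻¹ = g (π i)) :
    Nat.factorial m * 2 ^ (m - 1) ≤ Nat.card G' := by
  classical
  set A : Subgroup G' := Subgroup.closure (Set.range g) with hA
  letI : CommGroup A := Subgroup.closureCommGroupOfComm
    (by rintro _ ⟨i, rfl⟩ _ ⟨j, rfl⟩; exact (hcomm i j).eq)
  have hgmem : ∀ i, g i ∈ A := fun i => Subgroup.subset_closure (Set.mem_range_self i)
  set g' : Fin m → A := fun i => ⟨g i, hgmem i⟩ with hg'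
  set P : (Fin m → ℤ) → A := fun v => ∏ i, g' i ^ v i with hP
  have P_add : ∀ v w, P (v + w) = P v * P w := by
    intro v w
    simp only [hP, Pi.add_apply, zpow_add, Finset.prod_mul_distrib]
  have P_zero : P 0 = 1 := by simp [hP]
  have P_neg : ∀ v, P (-v) = (P v)⁻¹ := by
    intro v
    have h1 := P_add v (-v)
    simp only [add_neg_cancel, P_zero] at h1
    exact (inv_eq_of_mul_eq_one_right h1.symm).symm
  have P_single : ∀ (k : Fin m) (t : ℤ), P (Pi.single k t) = g' k ^ t := by
    intro k t
    show (∏ l, g' l ^ (Pi.single k t : Fin m → ℤ) l) = g' k ^ t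
    rw [Finset.prod_eq_single k (fun l _ hl => by rw [Pi.single_eq_of_ne hl, zpow_zero])
      (fun h => absurd (Finset.mem_univ k) h)]
    rw [Pi.single_eq_same]
  have hgen : ∀ x : A, ∃ v, P v = x := by
    rintro ⟨x, hx⟩
    induction hx using Subgroup.closure_induction with
    | mem x hx =>
      obtain ⟨i, rfl⟩ := hx
      exact ⟨Pi.single i 1, by rw [P_single, zpow_one]⟩
    | one => exact ⟨0, P_zero⟩
    | mul x y hx hy ihx ihy =>
      obtain ⟨v, hv⟩ := ihx
      obtain ⟨w, hw⟩ := ihy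
      exact ⟨v + w, by rw [P_add, hv, hw]; rfl⟩
    | inv x hx ihx =>
      obtain ⟨v, hv⟩ := ihx
      exact ⟨-v, by rw [P_neg, hv]; rfl⟩
  obtain ⟨m', rfl⟩ : ∃ m', m = m' + 2 := ⟨m - 2, by omega⟩
  set d := orderOf (g 0 * (g 1)⁻¹) with hd
  have hne01 : (0 : Fin (m' + 2)) ≠ 1 := Fin.zero_ne_one
  have hd2 : 2 ≤ d := by
    have hpos : 0 < d := orderOf_pos _
    have hne1 : g 0 * (g 1)⁻¹ ≠ 1 := by
      intro h
      exact hne01 (hinj (by rw [← mul_inv_eq_one]; exact h))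
    have : d ≠ 1 := fun h => hne1 (orderOf_eq_one_iff.mp h)
    omega
  have horder : ∀ i j : Fin (m' + 2), i ≠ j → orderOf (g i * (g j)⁻¹) = d := by
    intro i j hij
    have hπ : ∃ π : Equiv.Perm (Fin (m' + 2)), π 0 = i ∧ π 1 = j := by
      set τ := Equiv.swap (0 : Fin (m' + 2)) i with hτ
      have hτ0 : τ 0 = i := Equiv.swap_apply_left _ _
      have h1 : τ 0 ≠ τ 1 := fun h => hne01 (τ.injective h)
      refine ⟨τ.trans (Equiv.swap (τ 1) j), ?_, ?_⟩
      · rw [Equiv.trans_apply]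
        have h2 : Equiv.swap (τ 1) j (τ 0) = τ 0 := by
          apply Equiv.swap_apply_of_ne_of_ne
          · exact h1
          · rw [hτ0]; exact hij
        rw [h2, hτ0]
      · rw [Equiv.trans_apply]
        exact Equiv.swap_apply_left _ _
    obtain ⟨π, hπ0, hπ1⟩ := hπ
    obtain ⟨c, hcπ⟩ := hperm π
    have hsc : SemiconjBy c (g 0 * (g 1)⁻¹) (g i * (g j)⁻¹) := by
      have e : c * (g 0 * (g 1)⁻¹) * c⁻¹ = g i * (g j)⁻¹ := by
        calc c * (g 0 * (g 1)⁻¹) * c⁻¹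
            = (c * g 0 * c⁻¹) * (c * g 1 * c⁻¹)⁻¹ := by group
          _ = g (π 0) * (g (π 1))⁻¹ := by rw [hcπ 0, hcπ 1]
          _ = g i * (g j)⁻¹ := by rw [hπ0, hπ1]
      rw [SemiconjBy, ← e]; group
    exact (SemiconjBy.orderOf_eq c hsc).symm
  have hrel : ∀ v, P v = 1 → ∀ i j, (d : ℤ) ∣ v i - v j := by
    intro v hv i j
    rcases eq_or_ne i j with rfl | hij
    · simp
    set π := Equiv.swap i j with hπd
    obtain ⟨c, hcπ⟩ := hperm π
    have hmapsto : ∀ x : A, c * (x : G') * c⁻¹ ∈ A := by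
      rintro ⟨x, hx⟩
      induction hx using Subgroup.closure_induction with
      | mem y hy =>
        obtain ⟨k, rfl⟩ := hy
        rw [hcπ k]
        exact hgmem (π k)
      | one => simpa using Subgroup.one_mem A
      | mul x y hx hy ihx ihy =>
        have e : c * (x * y) * c⁻¹ = (c * x * c⁻¹) * (c * y * c⁻¹) := by group
        rw [e]; exact Subgroup.mul_mem _ ihx ihy
      | inv x hx ihx =>
        have e : c * x⁻¹ * c⁻¹ = (c * x * c⁻¹)⁻¹ := by group
        rw [e]; exact Subgroup.inv_mem _ ihx
    set ψ : A →* A := MonoidHom.codRestrict ((MulAut.conj c).toMonoidHom.comp A.subtype) A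
      (fun x => by simpa [MulAut.conj_apply] using hmapsto x) with hψ
    have hψg : ∀ k, ψ (g' k) = g' (π k) := by
      intro k
      apply Subtype.ext
      show c * (g k) * c⁻¹ = g (π k)
      exact hcπ k
    have hψP : ψ (P v) = P (fun k => v (π.symm k)) := by
      show ψ (∏ k, g' k ^ v k) = ∏ k, g' k ^ v (π.symm k)
      rw [map_prod]
      have e1 : ∀ k : Fin (m'+2), ψ (g' k ^ v k) = g' (π k) ^ v k := by
        intro k; rw [map_zpow, hψg]
      simp_rw [e1]
      have e4 := Equiv.prod_comp π (fun l => g' l ^ v (π.symm l))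
      simp only [Equiv.symm_apply_apply] at e4
      exact e4
    have hPv' : P (fun k => v (π.symm k)) = 1 := by rw [← hψP, hv, map_one]
    have hPw : P (fun k => v k - v (π k)) = 1 := by
      have e : (fun k => v k - v (π k)) = v + (-(fun k => v (π.symm k))) := by
        funext k
        simp [hπd, Equiv.symm_swap, sub_eq_add_neg]
      rw [e, P_add, P_neg, hPv', hv]
      simp
    set e := v i - v j with he
    have hwv : (fun k => v k - v (π k)) = Pi.single i e + Pi.single j (-e) := by
      funext k
      rcases eq_or_ne k i with rfl | hki
      · have h2 : π k = j := Equiv.swap_apply_left k j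
        rw [Pi.add_apply, Pi.single_eq_same, Pi.single_eq_of_ne hij, h2, add_zero]
      · rcases eq_or_ne k j with rfl | hkj
        · have h2 : π k = i := Equiv.swap_apply_right i k
          rw [Pi.add_apply, Pi.single_eq_same, Pi.single_eq_of_ne hij.symm, h2, zero_add, he]
          ring
        · have h2 : π k = k := Equiv.swap_apply_of_ne_of_ne hki hkj
          rw [Pi.add_apply, Pi.single_eq_of_ne hki, Pi.single_eq_of_ne hkj, h2, add_zero,
            sub_self]
    have key : (g' i * (g' j)⁻¹) ^ e = (1 : A) := by
      rw [mul_zpow, inv_zpow, ← zpow_neg, ← P_single i e, ← P_single j (-e), ← P_add, ← hwv,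
        hPw]
    have keyG : (g i * (g j)⁻¹) ^ e = (1 : G') := by
      have h3 := congrArg (A.subtype) key
      simpa using h3
    rw [← horder i j hij]
    exact orderOf_dvd_iff_zpow_eq_one.mpr keyG
  -- surjection from A onto (Fin (m'+1) → ZMod d)
  haveI : NeZero d := ⟨by omega⟩
  set lastI : Fin (m' + 2) := ⟨m' + 1, by omega⟩ with hlast
  set s : A → (Fin (m' + 1) → ZMod d) := fun x => fun i =>
    (((Classical.choose (hgen x)) ⟨i.val, by omega⟩ - (Classical.choose (hgen x)) lastI : ℤ) :
      ZMod d) with hs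
  have hs_surj : Function.Surjective s := by
    intro w
    choose z hz using fun i : Fin (m' + 1) => ZMod.intCast_surjective (w i)
    set v : Fin (m' + 2) → ℤ := fun k => if h : k.val < m' + 1 then z ⟨k.val, h⟩ else 0 with hv
    refine ⟨P v, ?_⟩
    funext i
    set v' := Classical.choose (hgen (P v)) with hv'
    have hPv' : P v' = P v := Classical.choose_spec (hgen (P v))
    have hdiff : ∀ a b : Fin (m'+2), (d:ℤ) ∣ (v' a - v a) - (v' b - v b) := by
      intro a b
      have h1 : P (v' + (-v)) = 1 := by
        rw [P_add, hPv', P_neg]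
        group
      have h0 := hrel _ h1 a b
      have he2 : (v' + (-v)) a - (v' + (-v)) b = (v' a - v a) - (v' b - v b) := by
        simp only [Pi.add_apply, Pi.neg_apply]; ring
      rwa [he2] at h0
    show ((v' ⟨i.val, by omega⟩ - v' lastI : ℤ) : ZMod d) = w i
    have hstep : ((v' ⟨i.val, by omega⟩ - v' lastI : ℤ) : ZMod d)
        = ((v ⟨i.val, by omega⟩ - v lastI : ℤ) : ZMod d) := by
      rw [← sub_eq_zero, ← Int.cast_sub, ZMod.intCast_zmod_eq_zero_iff_dvd]
      have h4 := hdiff ⟨i.val, by omega⟩ lastI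
      have he3 : (v' ⟨i.val, by omega⟩ - v ⟨i.val, by omega⟩) - (v' lastI - v lastI)
          = (v' ⟨i.val, by omega⟩ - v' lastI) - (v ⟨i.val, by omega⟩ - v lastI) := by ring
      rwa [he3] at h4
    rw [hstep]
    have hv1 : v ⟨i.val, by omega⟩ = z i := by
      rw [hv]
      simp only []
      rw [dif_pos (show (i.val : ℕ) < m' + 1 from i.isLt)]
    have hv2 : v lastI = 0 := by
      rw [hv]
      simp only []
      rw [dif_neg (by simp [hlast])]
    rw [hv1, hv2, sub_zero, hz]
  have hcardA : d ^ (m' + 1) ≤ Nat.card A := by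
    have h5 := Nat.card_le_card_of_surjective s hs_surj
    rwa [Nat.card_fun, Nat.card_zmod, Nat.card_eq_fintype_card, Fintype.card_fin] at h5
  -- injection Perm × A → G'
  set cc : Equiv.Perm (Fin (m'+2)) → G' := fun π => Classical.choose (hperm π) with hcc
  have hccπ : ∀ π i, cc π * g i * (cc π)⁻¹ = g (π i) := fun π => Classical.choose_spec (hperm π)
  have hAcommg : ∀ x : A, ∀ i, Commute (x : G') (g i) := by
    rintro ⟨x, hx⟩ i
    induction hx using Subgroup.closure_induction with
    | mem y hy =>
      obtain ⟨k, rfl⟩ := hy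
      exact hcomm k i
    | one => exact Commute.one_left _
    | mul a b ha hb iha ihb => exact Commute.mul_left iha ihb
    | inv a ha iha => exact iha.inv_left
  set F : Equiv.Perm (Fin (m'+2)) × A → G' := fun p => cc p.1 * (p.2 : G') with hF
  have hFinj : Function.Injective F := by
    rintro ⟨π, a⟩ ⟨ρ, b⟩ hab
    have hab' : cc π * (a : G') = cc ρ * (b : G') := hab
    have ht : (cc ρ)⁻¹ * cc π = (b : G') * (a : G')⁻¹ := by
      calc (cc ρ)⁻¹ * cc π = (cc ρ)⁻¹ * (cc π * (a:G')) * (a:G')⁻¹ := by group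
        _ = (cc ρ)⁻¹ * (cc ρ * (b:G')) * (a:G')⁻¹ := by rw [hab']
        _ = (b:G') * (a:G')⁻¹ := by group
    have hπρ : π = ρ := by
      apply Equiv.ext; intro i
      apply hinj
      have hba : Commute ((cc ρ)⁻¹ * cc π) (g i) := by
        rw [ht]
        exact Commute.mul_left (hAcommg b i) ((hAcommg a i).inv_left)
      calc g (π i) = cc π * g i * (cc π)⁻¹ := (hccπ π i).symm
        _ = cc ρ * (((cc ρ)⁻¹ * cc π) * g i * ((cc ρ)⁻¹ * cc π)⁻¹) * (cc ρ)⁻¹ := by group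
        _ = cc ρ * g i * (cc ρ)⁻¹ := by rw [comm_conj hba]
        _ = g (ρ i) := hccπ ρ i
    subst hπρ
    have hab2 : (a : G') = b := mul_left_cancel hab'
    exact Prod.ext rfl (Subtype.ext hab2)
  have hcardF := Nat.card_le_card_of_injective F hFinj
  rw [Nat.card_prod] at hcardF
  have hperm_card : Nat.card (Equiv.Perm (Fin (m'+2))) = Nat.factorial (m'+2) := by
    rw [Nat.card_eq_fintype_card, Fintype.card_perm, Fintype.card_fin]
  calc Nat.factorial (m'+2) * 2 ^ (m'+2-1)
      ≤ Nat.factorial (m'+2) * d ^ (m'+1) := by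
        apply Nat.mul_le_mul_left
        exact Nat.pow_le_pow_left hd2 _
    _ ≤ Nat.factorial (m'+2) * Nat.card A := Nat.mul_le_mul_left _ hcardA
    _ = Nat.card (Equiv.Perm (Fin (m'+2))) * Nat.card A := by rw [hperm_card]
    _ ≤ Nat.card G' := hcardF

end Counting



-- Part VI : realizers of permutations of the totally symmetric set
def Realizes (n : ℕ) (m : ℕ) (w : BraidGroup n) (π : Equiv.Perm (Fin m)) : Prop :=
  w ∈ commutator (BraidGroup n) ∧ (w * sig n 1 * w⁻¹ = sig n 1) ∧
    ∀ i : Fin m, w * sig n (2*(i:ℕ)+3) * w⁻¹ = sig n (2*((π i : Fin m) : ℕ)+3)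

lemma realizes_one {m : ℕ} : Realizes n m 1 1 :=
  ⟨Subgroup.one_mem _, by group, fun i => by simp⟩

lemma realizes_mul {m : ℕ} {w₁ w₂ : BraidGroup n} {π₁ π₂ : Equiv.Perm (Fin m)}
    (h₁ : Realizes n m w₁ π₁) (h₂ : Realizes n m w₂ π₂) :
    Realizes n m (w₁ * w₂) (π₁ * π₂) := by
  obtain ⟨hm₁, h1₁, hσ₁⟩ := h₁
  obtain ⟨hm₂, h1₂, hσ₂⟩ := h₂
  refine ⟨Subgroup.mul_mem _ hm₁ hm₂, ?_, ?_⟩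
  · rw [conj_conj, h1₂, h1₁]
  · intro i
    rw [conj_conj, hσ₂ i, hσ₁ (π₂ i)]
    rfl

-- the cabled transposition word
lemma T_conj1 {A : ℕ} (hA : 1 ≤ A) (hA' : A + 2 ≤ n - 1) :
    (sig n (A+1) * sig n (A+2) * sig n A * sig n (A+1)) * sig n A *
      (sig n (A+1) * sig n (A+2) * sig n A * sig n (A+1))⁻¹ = sig n (A+2) := by
  set a := sig n A
  set b := sig n (A+1)
  set c := sig n (A+2)
  have braid1 : a * b * a = b * a * b := sig_braid hA (by omega)
  have braid2 : b * c * b = c * b * c := by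
    have := sig_braid (n := n) (i := A+1) (by omega) (by omega)
    exact this
  have h1 : (b*c*a*b) * a = c * (b*c*a*b) := by
    calc (b*c*a*b)*a
        = b*c*(a*b*a) := by group
      _ = b*c*(b*a*b) := by rw [braid1]
      _ = (b*c*b)*(a*b) := by group
      _ = (c*b*c)*(a*b) := by rw [braid2]
      _ = c * (b*c*a*b) := by group
  rw [mul_inv_eq_iff_eq_mul]
  exact h1
lemma T_conj2 {A : ℕ} (hA : 1 ≤ A) (hA' : A + 2 ≤ n - 1) :
    (sig n (A+1) * sig n (A+2) * sig n A * sig n (A+1)) * sig n (A+2) *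
      (sig n (A+1) * sig n (A+2) * sig n A * sig n (A+1))⁻¹ = sig n A := by
  set a := sig n A
  set b := sig n (A+1)
  set c := sig n (A+2)
  have braid1 : a * b * a = b * a * b := sig_braid hA (by omega)
  have braid2 : b * c * b = c * b * c := by
    have := sig_braid (n := n) (i := A+1) (by omega) (by omega)
    exact this
  have hac : a * c = c * a := (sig_comm hA (by omega) hA').eq
  have h1 : (b*c*a*b) * c = a * (b*c*a*b) := by
    calc (b*c*a*b)*c
        = b*(c*a)*(b*c) := by group
      _ = b*(a*c)*(b*c) := by rw [← hac]
      _ = (b*a)*(c*b*c) := by group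
      _ = (b*a)*(b*c*b) := by rw [← braid2]
      _ = (b*a*b)*(c*b) := by group
      _ = (a*b*a)*(c*b) := by rw [← braid1]
      _ = a*b*(a*c)*b := by group
      _ = a*b*(c*a)*b := by rw [hac]
      _ = a * (b*c*a*b) := by group
  rw [mul_inv_eq_iff_eq_mul]
  exact h1
lemma T_commute {A C : ℕ} (hA : 1 ≤ A) (hA' : A + 2 ≤ n - 1) (hC : 1 ≤ C) (hC' : C ≤ n - 1)
    (h : C + 2 ≤ A ∨ A + 4 ≤ C) :
    Commute (sig n (A+1) * sig n (A+2) * sig n A * sig n (A+1)) (sig n C) := by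
  have h1 : Commute (sig n C) (sig n A) := by
    rcases h with h | h
    · exact sig_comm hC h (by omega)
    · exact (sig_comm hA (by omega) hC').symm
  have h2 : Commute (sig n C) (sig n (A+1)) := by
    rcases h with h | h
    · exact sig_comm hC (by omega) (by omega)
    · exact (sig_comm (by omega) (by omega) hC').symm
  have h3 : Commute (sig n C) (sig n (A+2)) := by
    rcases h with h | h
    · exact sig_comm hC (by omega) hA'
    · exact (sig_comm (by omega) (by omega) hC').symm
  exact (Commute.mul_left (Commute.mul_left (Commute.mul_left h2.symm h3.symm) h1.symm) h2.symm)

lemma sig3_commute_special (hn6 : 6 ≤ n) {i : ℕ} (hi : 2*i+3 ≤ n - 1) :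
    Commute (sig n 3) (sig n (2*i+3)) := by
  rcases Nat.eq_zero_or_pos i with rfl | hi0
  · exact Commute.refl _
  · exact sig_comm (by omega) (by omega) hi

lemma realizes_adj_swap (hn6 : 6 ≤ n) {m : ℕ} (hm : 2*m + 1 ≤ n - 1) {k : ℕ} (hk : k + 1 < m) :
    ∃ w, Realizes n m w (Equiv.swap ⟨k, by omega⟩ ⟨k+1, hk⟩) := by
  set A := 2*k+3 with hAdef
  have hkm : k < m := by omega
  have hA : 1 ≤ A := by omega
  have hA' : A + 2 ≤ n - 1 := by omega
  set T := sig n (A+1) * sig n (A+2) * sig n A * sig n (A+1) with hT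
  set w := T * ((sig n 3)⁻¹)^4 with hw
  have hmem : w ∈ commutator (BraidGroup n) := by
    have := prod_sig_mem (n := n) (c := 3) (by omega) (by omega) [A+1, A+2, A, A+1]
      (by intro j hj; fin_cases hj <;> omega)
    simpa [hw, hT, List.prod_cons, mul_assoc] using this
  have hs3 : ∀ {C : ℕ}, Commute (sig n 3) (sig n C) → w * sig n C * w⁻¹ = T * sig n C * T⁻¹ := by
    intro C hC
    have hcp : Commute (((sig n 3)⁻¹)^4) (sig n C) := (hC.inv_left.pow_left 4)
    rw [hw, conj_conj, comm_conj hcp]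
  refine ⟨w, hmem, ?_, ?_⟩
  · have h1 : Commute (sig n 3) (sig n 1) := (sig_comm (by omega) (by omega) (by omega)).symm
    rw [hs3 h1]
    exact comm_conj (T_commute hA hA' (by omega) (by omega) (Or.inl (by omega))).symm.symm
  · intro i
    rcases eq_or_ne (i : ℕ) k with hik | hik
    · obtain rfl : i = (⟨k, hkm⟩ : Fin m) := Fin.ext hik
      have hswap : ((Equiv.swap (⟨k, hkm⟩ : Fin m) ⟨k+1, hk⟩) ⟨k, hkm⟩ : Fin m) =
          ⟨k+1, hk⟩ := Equiv.swap_apply_left _ _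
      rw [show (⟨k, by omega⟩ : Fin m) = (⟨k, hkm⟩ : Fin m) from rfl, hswap]
      have h3A : Commute (sig n 3) (sig n A) := sig3_commute_special hn6 (by omega)
      have e : 2*(k+1)+3 = A + 2 := by omega
      rw [show (2*k+3 : ℕ) = A from rfl, e, hs3 h3A]
      exact T_conj1 hA hA'
    · rcases eq_or_ne (i : ℕ) (k+1) with hik1 | hik1
      · obtain rfl : i = (⟨k+1, hk⟩ : Fin m) := Fin.ext hik1
        have hswap : ((Equiv.swap (⟨k, hkm⟩ : Fin m) ⟨k+1, hk⟩) ⟨k+1, hk⟩ : Fin m) =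
            ⟨k, hkm⟩ := Equiv.swap_apply_right _ _
        rw [show (⟨k, by omega⟩ : Fin m) = (⟨k, hkm⟩ : Fin m) from rfl, hswap]
        have e : 2*(k+1)+3 = A + 2 := by omega
        have h3A : Commute (sig n 3) (sig n (A+2)) := by
          rw [← e]; exact sig3_commute_special hn6 (by omega)
        rw [e, hs3 h3A]
        exact T_conj2 hA hA'
      · have hswap : ((Equiv.swap (⟨k, by omega⟩ : Fin m) ⟨k+1, hk⟩) i : ℕ) = i := by
          rw [Equiv.swap_apply_of_ne_of_ne (fun h => hik (by rw [h])) (fun h => hik1 (by rw [h]))]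
        rw [hswap]
        have hiC : 2*(i:ℕ)+3 ≤ n - 1 := by have := i.isLt; omega
        have h3C : Commute (sig n 3) (sig n (2*(i:ℕ)+3)) := sig3_commute_special hn6 hiC
        rw [hs3 h3C]
        apply comm_conj
        apply T_commute hA hA' (by omega) hiC
        rcases Nat.lt_or_ge (i : ℕ) k with h | h
        · left; omega
        · right; omega

lemma realizes_swap (hn6 : 6 ≤ n) {m : ℕ} (hm : 2*m + 1 ≤ n - 1) :
    ∀ t : ℕ, ∀ p q : Fin m, (p:ℕ) < q → (q:ℕ) - p ≤ t → ∃ w, Realizes n m w (Equiv.swap p q) := by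
  intro t
  induction t with
  | zero => intro p q h1 h2; omega
  | succ t ih =>
    intro p q h1 h2
    rcases eq_or_ne ((q:ℕ) - p) 1 with hadj | hne
    · have hq : q = ⟨(p:ℕ)+1, by omega⟩ := Fin.ext (by simp; omega)
      have hp : p = ⟨(p:ℕ), p.isLt⟩ := Fin.ext rfl
      obtain ⟨w, hw⟩ := realizes_adj_swap hn6 hm (k := (p:ℕ)) (by omega)
      exact ⟨w, by rw [hp, hq]; exact hw⟩
    · set r : Fin m := ⟨(q:ℕ) - 1, by omega⟩ with hr
      have hpr : (p:ℕ) < r := by simp [hr]; omega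
      have hrq : (r:ℕ) < q := by simp [hr]; omega
      obtain ⟨w₁, hw₁⟩ := ih r q (by omega) (by simp [hr]; omega)
      obtain ⟨w₂, hw₂⟩ := ih p r (by omega) (by simp [hr]; omega)
      refine ⟨w₁ * w₂ * w₁, ?_⟩
      have hkey : Equiv.swap p q = Equiv.swap r q * Equiv.swap p r * Equiv.swap r q := by
        have h3 := Equiv.swap_apply_apply (Equiv.swap r q) p r
        have e1 : Equiv.swap r q p = p :=
          Equiv.swap_apply_of_ne_of_ne (Fin.ne_of_lt hpr) (Fin.ne_of_lt h1).symm.symm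
        have e2 : Equiv.swap r q r = q := Equiv.swap_apply_left _ _
        rw [e1, e2] at h3
        rw [h3, Equiv.swap_inv]
      rw [hkey]
      exact realizes_mul (realizes_mul hw₁ hw₂) hw₁
lemma realizes_all (hn6 : 6 ≤ n) {m : ℕ} (hm : 2*m + 1 ≤ n - 1) (π : Equiv.Perm (Fin m)) :
    ∃ w, Realizes n m w π := by
  refine Equiv.Perm.swap_induction_on π ⟨1, realizes_one⟩ ?_
  intro f x y hxy ihf
  · obtain ⟨w, hw⟩ := ihf
    have hs : ∃ ws, Realizes n m ws (Equiv.swap x y) := by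
      rcases Nat.lt_trichotomy (x:ℕ) (y:ℕ) with h | h | h
      · exact realizes_swap hn6 hm ((y:ℕ)) x y h (by omega)
      · exact absurd (Fin.ext h) hxy
      · rw [Equiv.swap_comm]
        exact realizes_swap hn6 hm ((x:ℕ)) y x h (by omega)
    obtain ⟨ws, hws⟩ := hs
    exact ⟨ws * w, realizes_mul hws hw⟩

end BraidProof

open BraidProof in
theorem card_ge_of_nontrivial' (n : ℕ) (hn : 5 ≤ n) (G : Type*) [Group G] [Finite G]
    (f : ↥(commutator (BraidGroup n)) →* G) (hf : f ≠ 1) :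
    2 ^ (n / 2 - 2) * Nat.factorial (n / 2 - 1) ≤ Nat.card G := by
  rcases Nat.lt_or_ge n 6 with h5 | h6
  · have hn5 : n = 5 := by omega
    subst hn5
    have h1 : 0 < Nat.card G := Nat.card_pos
    have h2 : (2:ℕ) ^ (5 / 2 - 2) * Nat.factorial (5 / 2 - 1) = 1 := by decide
    rw [h2]
    exact h1
  · set m := n / 2 - 1 with hmdef
    have hm2 : 2 ≤ m := by omega
    have hmn : 2 * m + 1 ≤ n - 1 := by omega
    have hAle : ∀ i : Fin m, 2 * (i:ℕ) + 3 ≤ n - 1 := fun i => by have := i.isLt; omega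
    have hxmem : ∀ i : Fin m, sig n 1 * (sig n (2*(i:ℕ)+3))⁻¹ ∈ commutator (BraidGroup n) :=
      fun i => sig_mul_inv_mem (by omega) (by omega) (by omega) (hAle i)
    set x : Fin m → ↥(commutator (BraidGroup n)) :=
      fun i => ⟨sig n 1 * (sig n (2*(i:ℕ)+3))⁻¹, hxmem i⟩ with hx
    set g : Fin m → G := fun i => f (x i) with hg
    have hBcomm : ∀ i j : Fin m, Commute ((x i : BraidGroup n)) ((x j : BraidGroup n)) := by
      intro i j
      rcases eq_or_ne i j with rfl | hij
      · exact Commute.refl _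
      · have h1 : Commute (sig n 1) (sig n (2*(j:ℕ)+3)) :=
          sig_comm (by omega) (by omega) (hAle j)
        have h1' : Commute (sig n 1) (sig n (2*(i:ℕ)+3)) :=
          sig_comm (by omega) (by omega) (hAle i)
        have h2 : Commute (sig n (2*(i:ℕ)+3)) (sig n (2*(j:ℕ)+3)) := by
          rcases Nat.lt_trichotomy (i:ℕ) (j:ℕ) with h | h | h
          · exact sig_comm (by omega) (by omega) (hAle j)
          · exact absurd (Fin.ext h) hij
          · exact (sig_comm (by omega) (by omega) (hAle i)).symm
        show Commute (sig n 1 * (sig n (2*(i:ℕ)+3))⁻¹) (sig n 1 * (sig n (2*(j:ℕ)+3))⁻¹)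
        exact Commute.mul_left ((Commute.refl _).mul_right h1.inv_right)
          ((h1'.symm.inv_left).mul_right (h2.inv_right.inv_left))
    have hcommSub : ∀ i j, Commute (x i) (x j) := fun i j => Subtype.ext (hBcomm i j)
    have hGcomm : ∀ i j, Commute (g i) (g j) := fun i j => (hcommSub i j).map f
    have hne : ∀ i, g i ≠ 1 := by
      intro i hgi
      apply hf
      have hcs : ∃ c, (1 ≤ c) ∧ (c ≤ n-1) ∧ (c + 2 ≤ 1 ∨ 1 + 2 ≤ c) ∧
          (c + 2 ≤ 2*(i:ℕ)+3 ∨ (2*(i:ℕ)+3) + 2 ≤ c) := by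
        rcases eq_or_ne (i:ℕ) 0 with h0 | h0
        · exact ⟨5, by omega, by omega, Or.inr (by omega), Or.inr (by omega)⟩
        · exact ⟨3, by omega, by omega, Or.inr (by omega), Or.inl (by omega)⟩
      obtain ⟨c, hc1, hc2, hc3, hc4⟩ := hcs
      exact hom_trivial h6 f (a := 1) (b := 2*(i:ℕ)+3) (by omega) (by omega) (hAle i)
        hc1 hc2 hc3 hc4 (hxmem i) hgi
    have hkill : ∀ i j : Fin m, (i:ℕ) < (j:ℕ) → g i = g j → False := by
      intro i j hij hgij
      apply hf
      have hzmem : sig n (2*(i:ℕ)+3) * (sig n (2*(j:ℕ)+3))⁻¹ ∈ commutator (BraidGroup n) :=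
        sig_mul_inv_mem (by omega) (by omega) (hAle i) (hAle j)
      have h1a : Commute (sig n 1) (sig n (2*(i:ℕ)+3)) :=
        sig_comm (by omega) (by omega) (hAle i)
      have h1b : Commute (sig n 1) (sig n (2*(j:ℕ)+3)) :=
        sig_comm (by omega) (by omega) (hAle j)
      have hab2 : Commute (sig n (2*(i:ℕ)+3)) (sig n (2*(j:ℕ)+3)) :=
        sig_comm (by omega) (by omega) (hAle j)
      have hval : ((x j * (x i)⁻¹ : ↥(commutator (BraidGroup n))) : BraidGroup n)
          = sig n (2*(i:ℕ)+3) * (sig n (2*(j:ℕ)+3))⁻¹ := by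
        show sig n 1 * (sig n (2*(j:ℕ)+3))⁻¹ * (sig n 1 * (sig n (2*(i:ℕ)+3))⁻¹)⁻¹
          = sig n (2*(i:ℕ)+3) * (sig n (2*(j:ℕ)+3))⁻¹
        have hc1 : Commute (sig n 1)
            ((sig n (2*(j:ℕ)+3))⁻¹ * sig n (2*(i:ℕ)+3)) :=
          (h1b.inv_right).mul_right h1a
        calc sig n 1 * (sig n (2*(j:ℕ)+3))⁻¹ * (sig n 1 * (sig n (2*(i:ℕ)+3))⁻¹)⁻¹
            = sig n 1 * ((sig n (2*(j:ℕ)+3))⁻¹ * sig n (2*(i:ℕ)+3)) * (sig n 1)⁻¹ := by group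
          _ = (sig n (2*(j:ℕ)+3))⁻¹ * sig n (2*(i:ℕ)+3) := comm_conj hc1
          _ = sig n (2*(i:ℕ)+3) * (sig n (2*(j:ℕ)+3))⁻¹ := (hab2.inv_right.eq).symm
      have hfz : f ⟨sig n (2*(i:ℕ)+3) * (sig n (2*(j:ℕ)+3))⁻¹, hzmem⟩ = 1 := by
        have heq : (⟨sig n (2*(i:ℕ)+3) * (sig n (2*(j:ℕ)+3))⁻¹, hzmem⟩ :
            ↥(commutator (BraidGroup n))) = x j * (x i)⁻¹ := Subtype.ext hval.symm
        rw [heq, map_mul, map_inv]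
        rw [show f (x j) = g j from rfl, show f (x i) = g i from rfl, hgij]
        group
      exact hom_trivial h6 f (a := 2*(i:ℕ)+3) (b := 2*(j:ℕ)+3) (c := 1) (by omega) (by omega)
        (hAle j) (by omega) (by omega) (Or.inl (by omega)) (Or.inl (by omega)) hzmem hfz
    have hinj : Function.Injective g := by
      intro i j hgij
      by_contra hne'
      rcases Nat.lt_trichotomy (i:ℕ) (j:ℕ) with h | h | h
      · exact hkill i j h hgij
      · exact hne' (Fin.ext h)
      · exact hkill j i h hgij.symm
    have hperm : ∀ π : Equiv.Perm (Fin m), ∃ c : G, ∀ i, c * g i * c⁻¹ = g (π i) := by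
      intro π
      obtain ⟨w, hwmem, hw1, hwσ⟩ := realizes_all h6 hmn π
      refine ⟨f ⟨w, hwmem⟩, ?_⟩
      intro i
      have hconj : (⟨w, hwmem⟩ : ↥(commutator (BraidGroup n))) * x i * (⟨w, hwmem⟩)⁻¹
          = x (π i) := by
        apply Subtype.ext
        show w * (sig n 1 * (sig n (2*(i:ℕ)+3))⁻¹) * w⁻¹
          = sig n 1 * (sig n (2*((π i : Fin m):ℕ)+3))⁻¹
        calc w * (sig n 1 * (sig n (2*(i:ℕ)+3))⁻¹) * w⁻¹
            = (w * sig n 1 * w⁻¹) * (w * sig n (2*(i:ℕ)+3) * w⁻¹)⁻¹ := by group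
          _ = sig n 1 * (sig n (2*((π i : Fin m):ℕ)+3))⁻¹ := by rw [hw1, hwσ i]
      calc f ⟨w, hwmem⟩ * g i * (f ⟨w, hwmem⟩)⁻¹
          = f ((⟨w, hwmem⟩ : ↥(commutator (BraidGroup n))) * x i * (⟨w, hwmem⟩)⁻¹) := by
            rw [map_mul, map_mul, map_inv]
        _ = g (π i) := by rw [hconj]
    have hmain := card_lower_bound hm2 g hinj hne hGcomm hperm
    have e1 : n / 2 - 2 = m - 1 := by omega
    rw [e1, Nat.mul_comm]
    exact hmain

/-- If `n ≥ 5`, `G` is a finite group, and `f : Bₙ' → G` is a non-trivial homomorphism from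
the commutator subgroup of the braid group, then `|G| ≥ 2^(⌊n/2⌋-2) · (⌊n/2⌋-1)!`. -/
theorem card_ge_of_nontrivial (n : ℕ) (hn : 5 ≤ n) (G : Type*) [Group G] [Finite G]
    (f : ↥(commutator (BraidGroup n)) →* G) (hf : f ≠ 1) :
    2 ^ (n / 2 - 2) * Nat.factorial (n / 2 - 1) ≤ Nat.card G :=
  card_ge_of_nontrivial' n hn G f hf
end

section
/- Let S = {g₁,…,gₙ} be a totally symmetric subset of a group G with n ≥ 3, and suppose g₁^{q₁} g₂^{q₂} ⋯ gₙ^{qₙ} = 1 in G with 0 ≤ qᵢ ≤ p-1 for 2 ≤ i ≤ n, where p is the minimal positive integer with gᵢ^p = gⱼ^p for all i,j. Then q₂ = q₃ = ⋯ = qₙ. -/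
/-- Let `S = {g₁, …, gₙ}` (`n ≥ 3`) be totally symmetric with common finite order `m`, and let
`p` be minimal positive with `gᵢ^p = gⱼ^p` for all `i, j`.  If `g₁^{q₁} ⋯ gₙ^{qₙ} = 1` with
`0 ≤ qᵢ ≤ p - 1` for `i ≥ 2`, then `q₂ = q₃ = ⋯ = qₙ`. -/
theorem exponents_eq {G : Type*} [Group G] {n m p : ℕ} (hn : 3 ≤ n)
    (g : Fin n → G) (hS : IsTotallySymmetricFamily g)
    (hm : ∀ i, orderOf (g i) = m) (hm0 : 0 < m)
    (hp0 : 0 < p)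
    (hp : ∀ i j, g i ^ p = g j ^ p)
    (hmin : ∀ q, 0 < q → (∀ i j, g i ^ q = g j ^ q) → p ≤ q)
    (q : Fin n → ℤ) (hq : ∀ i : Fin n, (i : ℕ) ≠ 0 → 0 ≤ q i ∧ q i ≤ (p : ℤ) - 1)
    (hrel : (List.ofFn fun i => g i ^ q i).prod = 1) :
    ∀ i j : Fin n, (i : ℕ) ≠ 0 → (j : ℕ) ≠ 0 → q i = q j := by
  classical
  obtain ⟨hinj, hcomm, hperm⟩ := hS
  intro i j hi hj
  by_contra hne
  have hij : i ≠ j := fun h => hne (by rw [h])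
  -- universal commutation certificate
  have Call : ∀ (f : Fin n → G), (∀ k, ∃ (k' : Fin n) (c : ℤ), f k = g k' ^ c) →
      ∀ s : Finset (Fin n), (s : Set (Fin n)).Pairwise (Function.onFun Commute f) := by
    intro f hf s x _ y _ _
    obtain ⟨a, c, hx⟩ := hf x
    obtain ⟨b, e, hy⟩ := hf y
    show Commute (f x) (f y)
    rw [hx, hy]
    exact (hcomm a b).zpow_zpow c e
  -- multiset congruence helper for noncommProd
  have msProd : ∀ {s t : Multiset G} (hst : s = t) (hs : {x | x ∈ s}.Pairwise Commute),
      s.noncommProd hs = t.noncommProd (hst ▸ hs) := by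
    rintro s t rfl hs; rfl
  -- bridge between list products and noncommProd over univ
  have bridge : ∀ (f : Fin n → G)
      (comm : ((Finset.univ : Finset (Fin n)) : Set (Fin n)).Pairwise (Function.onFun Commute f)),
      Finset.univ.noncommProd f comm = (List.ofFn f).prod := by
    intro f comm
    have hst : Multiset.map f (Finset.univ : Finset (Fin n)).val = ↑(List.ofFn f) := by
      rw [Fin.univ_def, List.ofFn_eq_map]
      rfl
    exact (msProd hst _).trans (Multiset.noncommProd_coe _ _)
  -- reindexing a noncommProd over univ by a permutation
  have reindex : ∀ (f : Fin n → G) (σ : Equiv.Perm (Fin n)) comm comm',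
      Finset.univ.noncommProd (fun k => f (σ k)) comm = Finset.univ.noncommProd f comm' := by
    intro f σ comm comm'
    have hst : Multiset.map (fun k => f (σ k)) (Finset.univ : Finset (Fin n)).val
        = Multiset.map f (Finset.univ : Finset (Fin n)).val := by
      conv_rhs => rw [← Multiset.map_univ_val_equiv σ]
      rw [Multiset.map_map]
      rfl
    exact msProd hst _
  -- the conjugated relations
  have relG : ∀ σ : Equiv.Perm (Fin n), (List.ofFn fun k => g (σ k) ^ q k).prod = 1 := by
    intro σ
    obtain ⟨h, hh⟩ := hperm σ
    calc (List.ofFn fun k => g (σ k) ^ q k).prod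
        = (List.ofFn fun k => (MulAut.conj h) (g k ^ q k)).prod := by
          simp only [map_zpow, MulAut.conj_apply, hh]
      _ = (MulAut.conj h) (List.ofFn fun k => g k ^ q k).prod := by
          rw [map_list_prod, List.map_ofFn]; rfl
      _ = 1 := by rw [hrel, map_one]
  have Q1 : Finset.univ.noncommProd (fun k => g k ^ q k)
      (Call _ (fun k => ⟨k, q k, rfl⟩) _) = 1 := (bridge _ _).trans hrel
  have Q2 : Finset.univ.noncommProd (fun k => g k ^ q (Equiv.swap i j k))
      (Call _ (fun k => ⟨k, q (Equiv.swap i j k), rfl⟩) _) = 1 := by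
    have hfun : (fun k => (fun k' => g k' ^ q (Equiv.swap i j k')) (Equiv.swap i j k))
        = fun k => g (Equiv.swap i j k) ^ q k := by
      funext k
      simp only [Equiv.swap_apply_self]
    have hlist : (List.ofFn fun k =>
        (fun k' => g k' ^ q (Equiv.swap i j k')) (Equiv.swap i j k)).prod = 1 := by
      rw [hfun]; exact relG (Equiv.swap i j)
    have h2 : Finset.univ.noncommProd
        (fun k => (fun k' => g k' ^ q (Equiv.swap i j k')) (Equiv.swap i j k))
        (Call _ (fun k => ⟨Equiv.swap i j k, q (Equiv.swap i j (Equiv.swap i j k)), rfl⟩) _) = 1 :=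
      (bridge _ _).trans hlist
    exact (reindex (fun k' => g k' ^ q (Equiv.swap i j k')) (Equiv.swap i j) _ _).symm.trans h2
  -- subtract the two relations
  have Q3 : Finset.univ.noncommProd (fun k => g k ^ (q k - q (Equiv.swap i j k)))
      (Call _ (fun k => ⟨k, _, rfl⟩) _) = 1 := by
    have hmul := Finset.noncommProd_mul_distrib (s := (Finset.univ : Finset (Fin n)))
      (fun k => g k ^ (q k - q (Equiv.swap i j k))) (fun k => g k ^ q (Equiv.swap i j k))
      (Call _ (fun k => ⟨k, _, rfl⟩) _) (Call _ (fun k => ⟨k, _, rfl⟩) _)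
      (fun x _ y _ _ => (hcomm x y).zpow_zpow _ _)
    have hcongr : Finset.univ.noncommProd
        ((fun k => g k ^ (q k - q (Equiv.swap i j k))) * fun k => g k ^ q (Equiv.swap i j k))
        (Finset.noncommProd_mul_distrib_aux (Call _ (fun k => ⟨k, _, rfl⟩) _)
          (Call _ (fun k => ⟨k, _, rfl⟩) _) (fun x _ y _ _ => (hcomm x y).zpow_zpow _ _))
        = Finset.univ.noncommProd (fun k => g k ^ q k)
          (Call _ (fun k => ⟨k, q k, rfl⟩) _) := by
      refine Finset.noncommProd_congr rfl (fun x _ => ?_) _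
      show g x ^ (q x - q (Equiv.swap i j x)) * g x ^ q (Equiv.swap i j x) = g x ^ q x
      rw [← zpow_add, sub_add_cancel]
    calc Finset.univ.noncommProd (fun k => g k ^ (q k - q (Equiv.swap i j k)))
          (Call _ (fun k => ⟨k, _, rfl⟩) _)
        = Finset.univ.noncommProd (fun k => g k ^ (q k - q (Equiv.swap i j k)))
            (Call _ (fun k => ⟨k, _, rfl⟩) _)
          * Finset.univ.noncommProd (fun k => g k ^ q (Equiv.swap i j k))
            (Call _ (fun k => ⟨k, q (Equiv.swap i j k), rfl⟩) _) := by rw [Q2, mul_one]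
      _ = Finset.univ.noncommProd
            ((fun k => g k ^ (q k - q (Equiv.swap i j k))) * fun k => g k ^ q (Equiv.swap i j k))
            (Finset.noncommProd_mul_distrib_aux (Call _ (fun k => ⟨k, _, rfl⟩) _)
              (Call _ (fun k => ⟨k, _, rfl⟩) _) (fun x _ y _ _ => (hcomm x y).zpow_zpow _ _)) :=
          hmul.symm
      _ = Finset.univ.noncommProd (fun k => g k ^ q k) (Call _ (fun k => ⟨k, q k, rfl⟩) _) :=
          hcongr
      _ = 1 := Q1
  -- evaluate the product, whose support is `{i, j}`
  have hval : Finset.univ.noncommProd (fun k => g k ^ (q k - q (Equiv.swap i j k)))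
      (Call _ (fun k => ⟨k, _, rfl⟩) _) = g i ^ (q i - q j) * g j ^ (q j - q i) := by
    have hu : ({i, j} : Finset (Fin n)) ∪ ({i, j} : Finset (Fin n))ᶜ = Finset.univ :=
      Finset.union_compl _
    have step1 := Finset.noncommProd_congr hu.symm
      (fun x _ => rfl) (f := fun k => g k ^ (q k - q (Equiv.swap i j k)))
      (g := fun k => g k ^ (q k - q (Equiv.swap i j k))) (Call _ (fun k => ⟨k, _, rfl⟩) _)
    have step2 := Finset.noncommProd_union_of_disjoint
      (s := ({i, j} : Finset (Fin n))) (t := ({i, j} : Finset (Fin n))ᶜ)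
      (by exact disjoint_compl_right)
      (fun k => g k ^ (q k - q (Equiv.swap i j k)))
      (Call _ (fun k => ⟨k, _, rfl⟩) _)
    have hcompl : (({i, j} : Finset (Fin n))ᶜ).noncommProd
        (fun k => g k ^ (q k - q (Equiv.swap i j k))) (Call _ (fun k => ⟨k, _, rfl⟩) _) = 1 := by
      have := Finset.noncommProd_eq_pow_card (({i, j} : Finset (Fin n))ᶜ)
        (fun k => g k ^ (q k - q (Equiv.swap i j k))) (Call _ (fun k => ⟨k, _, rfl⟩) _) 1 ?_
      · rw [this, one_pow]
      · intro x hx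
        simp only [Finset.mem_compl, Finset.mem_insert, Finset.mem_singleton, not_or] at hx
        show g x ^ (q x - q (Equiv.swap i j x)) = 1
        rw [Equiv.swap_apply_of_ne_of_ne hx.1 hx.2, sub_self, zpow_zero]
    have hpair : (({i, j} : Finset (Fin n))).noncommProd
        (fun k => g k ^ (q k - q (Equiv.swap i j k))) (Call _ (fun k => ⟨k, _, rfl⟩) _)
        = g i ^ (q i - q j) * g j ^ (q j - q i) := by
      have hnotmem : i ∉ ({j} : Finset (Fin n)) := by
        simp only [Finset.mem_singleton]; exact hij
      rw [show ({i, j} : Finset (Fin n)) = insert i {j} from rfl,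
        Finset.noncommProd_insert_of_notMem _ _ _ _ hnotmem, Finset.noncommProd_singleton,
        Equiv.swap_apply_left, Equiv.swap_apply_right]
    calc Finset.univ.noncommProd (fun k => g k ^ (q k - q (Equiv.swap i j k)))
          (Call _ (fun k => ⟨k, _, rfl⟩) _)
        = (({i, j} : Finset (Fin n)) ∪ ({i, j} : Finset (Fin n))ᶜ).noncommProd
            (fun k => g k ^ (q k - q (Equiv.swap i j k))) (Call _ (fun k => ⟨k, _, rfl⟩) _) :=
          step1
      _ = _ * _ := step2
      _ = g i ^ (q i - q j) * g j ^ (q j - q i) := by rw [hpair, hcompl, mul_one]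
  have rel4 : g i ^ (q i - q j) * g j ^ (q j - q i) = 1 := hval.symm.trans Q3
  have hdG : g i ^ (q i - q j) = g j ^ (q i - q j) := by
    rw [show q j - q i = -(q i - q j) by ring, zpow_neg, mul_inv_eq_one] at rel4
    exact rel4
  -- spread the relation to every pair, using a permutation sending i ↦ k, j ↦ l
  set d : ℤ := q i - q j with hd
  have spread : ∀ k l : Fin n, g k ^ d = g l ^ d := by
    intro k l
    by_cases hkl : k = l
    · rw [hkl]
    · set j' : Fin n := Equiv.swap i k j with hj'
      have hj'k : j' ≠ k := by
        intro hcon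
        have hc2 : j' = Equiv.swap i k i := by rw [hcon, Equiv.swap_apply_left]
        exact hij ((Equiv.swap i k).injective hc2).symm
      set σ' : Equiv.Perm (Fin n) := (Equiv.swap i k).trans (Equiv.swap j' l) with hσ'
      have e1 : σ' i = k := by
        simp only [hσ', Equiv.trans_apply, Equiv.swap_apply_left]
        exact Equiv.swap_apply_of_ne_of_ne (Ne.symm hj'k) hkl
      have e2 : σ' j = l := by
        simp only [hσ', Equiv.trans_apply, ← hj', Equiv.swap_apply_left]
      obtain ⟨h, hh⟩ := hperm σ'
      have hstep : (MulAut.conj h) (g i ^ d) = (MulAut.conj h) (g j ^ d) := by rw [hdG]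
      rwa [map_zpow, map_zpow, MulAut.conj_apply, MulAut.conj_apply, hh i, hh j,
        e1, e2] at hstep
  -- contradiction with minimality of p
  have hd0 : d ≠ 0 := sub_ne_zero.mpr hne
  have hee : ∀ k l, g k ^ (d.natAbs : ℤ) = g l ^ (d.natAbs : ℤ) := by
    intro k l
    rcases Int.natAbs_eq d with h | h
    · rw [← h]; exact spread k l
    · rw [show (d.natAbs : ℤ) = -d by omega, zpow_neg, zpow_neg, spread k l]
  have he : ∀ k l, g k ^ d.natAbs = g l ^ d.natAbs := by
    intro k l
    have h8 := hee k l
    rwa [zpow_natCast, zpow_natCast] at h8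
  have hpe : p ≤ d.natAbs := hmin d.natAbs (Int.natAbs_pos.mpr hd0) he
  obtain ⟨hq1, hq2⟩ := hq i hi
  obtain ⟨hq3, hq4⟩ := hq j hj
  omega
end
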